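/- arXiv:2403.05809 — 6 statements merged into one kernel-verified Lean document; each statement's English description precedes it below -/
import Mathlib

section
/- Let K = {x ∈ ℝⁿ : wᵢ·x + bᵢ ≥ 0, 1 ≤ i ≤ m} be a bounded convex polytope with nonempty interior in ℝⁿ (so m ≥ n+1). Then there exist positive real numbers λ₁,...,λₘ > 0 such that Σᵢ λᵢ wᵢ = 0. -/
open scoped RealInnerProductSpace

/-- If K = {x : ⟪wᵢ,x⟫ + bᵢ ≥ 0} is a bounded (compact) convex polytope with
nonempty interior in ℝⁿ, then there exist λᵢ > 0 with Σ λᵢ wᵢ = 0. -/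
theorem exists_positive_combination_eq_zero
    (n m : ℕ) (w : Fin m → EuclideanSpace ℝ (Fin n)) (b : Fin m → ℝ)
    (hw : ∀ i, w i ≠ 0)
    (K : Set (EuclideanSpace ℝ (Fin n)))
    (hK : K = {x | ∀ i, ⟪w i, x⟫ + b i ≥ 0})
    (hKc : IsCompact K) (hKi : (interior K).Nonempty) :
    ∃ lam : Fin m → ℝ, (∀ i, 0 < lam i) ∧ ∑ i, lam i • w i = 0 := by
  classical
  set f : Fin m → EuclideanSpace ℝ (Fin n) → ℝ := fun i x => ⟪w i, x⟫ + b i with hf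
  have hmemK : ∀ x, x ∈ K ↔ ∀ i, 0 ≤ f i x := by
    intro x; rw [hK]; rfl
  obtain ⟨y, hy⟩ := hKi
  obtain ⟨r, hr, hball⟩ := Metric.isOpen_iff.1 isOpen_interior y hy
  -- all slacks at y are strictly positive
  have hslack : ∀ i, 0 < f i y := by
    intro i
    have hwi : (0:ℝ) < ‖w i‖ := norm_pos_iff.2 (hw i)
    set c : ℝ := r / (2 * ‖w i‖) with hc
    have hcpos : 0 < c := div_pos hr (by positivity)
    set z : EuclideanSpace ℝ (Fin n) := y - c • w i with hzdef
    have hdist : dist z y < r := by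
      have h1 : z - y = -(c • w i) := by rw [hzdef]; abel
      rw [dist_eq_norm, h1, norm_neg, norm_smul, Real.norm_eq_abs, abs_of_pos hcpos, hc,
        div_mul_eq_mul_div, div_lt_iff₀ (by positivity)]
      nlinarith
    have hzK : z ∈ K := interior_subset (hball (Metric.mem_ball.2 hdist))
    have hfz : 0 ≤ f i z := (hmemK z).1 hzK i
    have hexp : f i z = f i y - c * ⟪w i, w i⟫ := by
      simp only [hf, hzdef, inner_sub_right, real_inner_smul_right]
      ring
    have hwin : ⟪w i, w i⟫ = ‖w i‖ ^ 2 := real_inner_self_eq_norm_sq (w i)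
    have : 0 < c * ⟪w i, w i⟫ := by
      rw [hwin]; positivity
    linarith [hfz, hexp ▸ hfz]
  -- maximize the product of slacks on K
  set g : EuclideanSpace ℝ (Fin n) → ℝ := fun x => ∏ i, f i x with hg
  have hgc : Continuous g := by
    apply continuous_finset_prod
    intro i _
    exact ((innerSL ℝ (w i)).continuous).add continuous_const
  have hyK : y ∈ K := interior_subset hy
  obtain ⟨x₀, hx₀K, hmax⟩ := hKc.exists_isMaxOn ⟨y, hyK⟩ hgc.continuousOn
  have hgy : 0 < g y := Finset.prod_pos fun i _ => hslack i
  have hgx₀ : 0 < g x₀ := lt_of_lt_of_le hgy (hmax hyK)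
  -- all slacks at x₀ are strictly positive
  have hpos : ∀ i, 0 < f i x₀ := by
    intro i
    rcases lt_or_eq_of_le ((hmemK x₀).1 hx₀K i) with h | h
    · exact h
    · exfalso
      have : g x₀ = 0 := Finset.prod_eq_zero (Finset.mem_univ i) h.symm
      rw [this] at hgx₀; exact lt_irrefl 0 hgx₀
  -- the open set where all slacks are positive
  set U : Set (EuclideanSpace ℝ (Fin n)) := {x | ∀ i, 0 < f i x} with hU
  have hUopen : IsOpen U := by
    have : U = ⋂ i, (f i) ⁻¹' Set.Ioi 0 := by
      ext x; simp [hU, Set.mem_iInter]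
    rw [this]
    exact isOpen_iInter_of_finite fun i =>
      (isOpen_Ioi).preimage (((innerSL ℝ (w i)).continuous).add continuous_const)
  have hUK : U ⊆ K := fun x hx => (hmemK x).2 fun i => le_of_lt (hx i)
  have hx₀U : x₀ ∈ U := hpos
  -- x₀ is a local max of g
  have hlocmax : IsLocalMax g x₀ := by
    apply Filter.eventually_of_mem (hUopen.mem_nhds hx₀U)
    intro x hx
    exact hmax (hUK hx)
  -- derivative of g at x₀
  have hderiv : ∀ i ∈ Finset.univ, HasFDerivAt (f i) (innerSL ℝ (w i)) x₀ := by
    intro i _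
    have h1 : HasFDerivAt (fun x => (innerSL ℝ (w i)) x) (innerSL ℝ (w i)) x₀ :=
      (innerSL ℝ (w i)).hasFDerivAt
    simpa [hf] using h1.add_const (b i)
  have hgderiv : HasFDerivAt g
      (∑ i, (∏ j ∈ Finset.univ.erase i, f j x₀) • (innerSL ℝ (w i))) x₀ := by
    have := HasFDerivAt.finset_prod (u := Finset.univ) hderiv
    simpa [hg] using this
  have hzero := hlocmax.hasFDerivAt_eq_zero hgderiv
  refine ⟨fun i => ∏ j ∈ Finset.univ.erase i, f j x₀, ?_, ?_⟩
  · intro i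
    exact Finset.prod_pos fun j _ => hpos j
  · set lam : Fin m → ℝ := fun i => ∏ j ∈ Finset.univ.erase i, f j x₀ with hlam
    set v : EuclideanSpace ℝ (Fin n) := ∑ i, lam i • w i with hv
    have hinner : ⟪v, v⟫ = 0 := by
      have happ := congrFun (congrArg DFunLike.coe hzero) v
      simp only [ContinuousLinearMap.coe_sum', Finset.sum_apply,
        ContinuousLinearMap.coe_smul', Pi.smul_apply, innerSL_apply_apply,
        ContinuousLinearMap.zero_apply, smul_eq_mul] at happ
      rw [hv, sum_inner]
      rw [← happ]
      exact Finset.sum_congr rfl fun i _ => by rw [real_inner_smul_left]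
    exact inner_self_eq_zero.1 hinner
end

section
/- Let τ = {x ∈ ℝⁿ : wᵢ·x + bᵢ ≥ 0, 1 ≤ i ≤ m} be a compact convex polytope with nonempty interior, ε > 0, and v(x) = a·x + c an affine function with R := sup over τ of |v|. Then there exist a matrix W₁ ∈ ℝ^{m×n}, vectors b₁ ∈ ℝᵐ, w₂ ∈ ℝ^{1×m}, and b₂ ∈ ℝ, such that the function φ(x) := σ(w₂ σ(W₁ x + b₁) + b₂) satisfies: (i) φ(x) = v(x) + R for all x ∈ τ with dist(x, ∂τ) ≥ ε; (ii) 0 ≤ φ(x) ≤ 2R for all x ∈ τ; (iii) φ(x) = 0 for all x ∉ τ. -/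
open scoped RealInnerProductSpace
open Finset

section Aux
variable {E : Type*} [NormedAddCommGroup E] [InnerProductSpace ℝ E]

theorem cone_closed_aux [FiniteDimensional ℝ E] {k : ℕ} (w : Fin k → E) (s : Finset (Fin k)) :
    IsClosed {x : E | ∃ c : Fin k → ℝ, (∀ i, 0 ≤ c i) ∧ ∑ i ∈ s, c i • w i = x} := by
  induction s using Finset.strongInductionOn with
  | _ s ih =>
  by_cases hli : LinearIndependent ℝ (fun i : {i // i ∈ s} => w i)
  · set f := Fintype.linearCombination ℝ (fun i : {i // i ∈ s} => w i) with hf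
    have hinj : Function.Injective f := by
      rw [← LinearMap.ker_eq_bot]
      rw [LinearMap.ker_eq_bot']
      intro g hg
      have := Fintype.linearIndependent_iff.mp hli g (by
        simpa [hf, Fintype.linearCombination_apply] using hg)
      funext i; exact this i
    have hce := LinearMap.isClosedEmbedding_of_injective (LinearMap.ker_eq_bot.mpr hinj)
    have hsetcl : IsClosed {c : {i // i ∈ s} → ℝ | ∀ i, 0 ≤ c i} := by
      have : {c : {i // i ∈ s} → ℝ | ∀ i, 0 ≤ c i} = ⋂ i, {c | 0 ≤ c i} :=
        by ext; simp
      rw [this]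
      exact isClosed_iInter fun i => isClosed_le continuous_const (continuous_apply i)
    have himg : {x : E | ∃ c : Fin k → ℝ, (∀ i, 0 ≤ c i) ∧ ∑ i ∈ s, c i • w i = x}
        = f '' {c : {i // i ∈ s} → ℝ | ∀ i, 0 ≤ c i} := by
      ext x
      constructor
      · rintro ⟨c, hc, rfl⟩
        refine ⟨fun i => c i, fun i => hc i, ?_⟩
        simp only [hf, Fintype.linearCombination_apply]
        rw [← Finset.sum_coe_sort s (fun i => c i • w i)]
      · rintro ⟨c, hc, rfl⟩
        classical
        refine ⟨fun i => if h : i ∈ s then c ⟨i, h⟩ else 0, ?_, ?_⟩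
        · intro i
          by_cases h : i ∈ s
          · simpa [h] using hc ⟨i, h⟩
          · simp [h]
        · simp only [hf, Fintype.linearCombination_apply]
          rw [← Finset.sum_coe_sort s]
          apply Finset.sum_congr rfl
          intro i _
          simp [i.2]
    rw [himg]
    exact hce.isClosedMap _ hsetcl
  · classical
    obtain ⟨g0, hg0sum, j0, hj0⟩ := Fintype.not_linearIndependent_iff.mp hli
    have hsign : ∃ g' : {i // i ∈ s} → ℝ, ∑ i, g' i • w i.1 = 0 ∧ ∃ j, 0 < g' j := by
      rcases lt_or_gt_of_ne hj0 with h | h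
      · refine ⟨-g0, ?_, ⟨j0, by simpa using h⟩⟩
        simpa [neg_smul] using congrArg Neg.neg hg0sum
      · exact ⟨g0, hg0sum, j0, h⟩
    obtain ⟨g', hg'sum, j0', hj0'⟩ := hsign
    set g : Fin k → ℝ := fun i => if h : i ∈ s then g' ⟨i, h⟩ else 0 with hgdef
    have hgsum : ∑ i ∈ s, g i • w i = 0 := by
      rw [← Finset.sum_coe_sort s (fun i => g i • w i)]
      rw [← hg'sum]
      apply Finset.sum_congr rfl
      intro i _
      simp [hgdef, i.2]
    set T : Finset (Fin k) := s.filter (fun i => 0 < g i) with hT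
    have hj0T : (j0' : Fin k) ∈ T := by
      simp only [hT, Finset.mem_filter]
      exact ⟨j0'.2, by simpa [hgdef, j0'.2] using hj0'⟩
    have hTne : T.Nonempty := ⟨_, hj0T⟩
    have hunion : {x : E | ∃ c : Fin k → ℝ, (∀ i, 0 ≤ c i) ∧ ∑ i ∈ s, c i • w i = x}
        = ⋃ j ∈ (T : Set (Fin k)), {x : E | ∃ c : Fin k → ℝ, (∀ i, 0 ≤ c i) ∧
            ∑ i ∈ s.erase j, c i • w i = x} := by
      ext x
      simp only [Set.mem_setOf_eq, Set.mem_iUnion]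
      constructor
      · rintro ⟨c, hc, rfl⟩
        obtain ⟨jm, hjmT, hjmmin⟩ := Finset.exists_min_image T (fun j => c j / g j) hTne
        have hgjm : 0 < g jm := (Finset.mem_filter.mp hjmT).2
        set t : ℝ := c jm / g jm with htdef
        have ht : 0 ≤ t := div_nonneg (hc jm) hgjm.le
        set c' : Fin k → ℝ := fun i => c i - t * g i with hc'def
        have hc'nn : ∀ i, 0 ≤ c' i := by
          intro i
          rcases le_or_gt (g i) 0 with h | h
          · have : t * g i ≤ 0 := mul_nonpos_of_nonneg_of_nonpos ht h
            simp only [hc'def]; linarith [hc i]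
          · have his : i ∈ s := by
              by_contra hns
              simp [hgdef, hns] at h
            have hiT : i ∈ T := Finset.mem_filter.mpr ⟨his, h⟩
            have := hjmmin i hiT
            have : t * g i ≤ c i := by
              rw [htdef]
              calc c jm / g jm * g i ≤ c i / g i * g i := by
                    apply mul_le_mul_of_nonneg_right this h.le
                _ = c i := div_mul_cancel₀ _ (ne_of_gt h)
            simp only [hc'def]; linarith
        have hc'jm : c' jm = 0 := by
          simp only [hc'def, htdef]
          field_simp
          ring
        have hsum' : ∑ i ∈ s, c' i • w i = ∑ i ∈ s, c i • w i := by
          simp only [hc'def, sub_smul, Finset.sum_sub_distrib, mul_smul]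
          rw [← Finset.smul_sum, hgsum, smul_zero, sub_zero]
        refine ⟨jm, hjmT, c', hc'nn, ?_⟩
        rw [Finset.sum_erase _ (by rw [hc'jm, zero_smul]), hsum']
      · rintro ⟨j, hjT, c, hc, rfl⟩
        have hjs : j ∈ s := (Finset.mem_filter.mp hjT).1
        set c' : Fin k → ℝ := fun i => if i = j then 0 else c i with hc'def
        refine ⟨c', fun i => by by_cases h : i = j <;> simp [hc'def, h, hc i], ?_⟩
        rw [← Finset.add_sum_erase _ _ hjs]
        have h1 : c' j • w j = 0 := by simp [hc'def]
        rw [h1, zero_add]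
        apply Finset.sum_congr rfl
        intro i hi
        have : i ≠ j := Finset.ne_of_mem_erase hi
        simp [hc'def, this]
    rw [hunion]
    apply Set.Finite.isClosed_biUnion (T.finite_toSet)
    intro j hj
    exact ih (s.erase j) (Finset.erase_ssubset ((Finset.mem_filter.mp hj).1))

theorem cone_surj [FiniteDimensional ℝ E] [CompleteSpace E] {k : ℕ} (w : Fin k → E)
    (hrec : ∀ d : E, (∀ i, 0 ≤ ⟪w i, d⟫) → d = 0) (z : E) :
    ∃ c : Fin k → ℝ, (∀ i, 0 ≤ c i) ∧ ∑ i, c i • w i = z := by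
  classical
  set K : Set E := {x : E | ∃ c : Fin k → ℝ, (∀ i, 0 ≤ c i) ∧ ∑ i ∈ Finset.univ, c i • w i = x}
    with hK
  by_contra hz
  have hzK : z ∉ K := by
    intro ⟨c, hc, hsum⟩
    exact hz ⟨c, hc, hsum⟩
  have hKcl : IsClosed K := cone_closed_aux w Finset.univ
  have hKconv : Convex ℝ K := by
    rintro x ⟨cx, hcx, rfl⟩ y ⟨cy, hcy, rfl⟩ p q hp hq hpq
    refine ⟨fun i => p * cx i + q * cy i,
      fun i => add_nonneg (mul_nonneg hp (hcx i)) (mul_nonneg hq (hcy i)), ?_⟩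
    simp only [add_smul, mul_smul, Finset.sum_add_distrib, ← Finset.smul_sum]
  obtain ⟨f, u, hfK, hfz⟩ := geometric_hahn_banach_closed_point hKconv hKcl hzK
  have h0K : (0 : E) ∈ K := ⟨0, fun i => le_refl 0, by simp⟩
  have hu0 : 0 < u := by simpa using hfK 0 h0K
  have hfw : ∀ i, f (w i) ≤ 0 := by
    intro i
    by_contra h
    push_neg at h
    have hmem : ∀ t : ℝ, 0 ≤ t → t • w i ∈ K := by
      intro t ht
      refine ⟨fun j => if j = i then t else 0, fun j => by by_cases hj : j = i <;> simp [hj, ht], ?_⟩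
      simp [ite_smul, Finset.sum_ite_eq']
    have := hfK ((2 * u / f (w i)) • w i) (hmem _ (by positivity))
    rw [map_smul] at this
    simp only [smul_eq_mul] at this
    rw [div_mul_cancel₀ _ (ne_of_gt h)] at this
    linarith
  set y : E := (InnerProductSpace.toDual ℝ E).symm f with hy
  have hyx : ∀ x : E, ⟪y, x⟫ = f x := fun x => InnerProductSpace.toDual_symm_apply
  have hd : (-y) = 0 := by
    apply hrec
    intro i
    have := hfw i
    rw [← hyx] at this
    rw [inner_neg_right]
    rw [real_inner_comm]
    linarith
  have hy0 : y = 0 := by simpa [neg_eq_zero] using hd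
  have : f z = 0 := by rw [← hyx, hy0, inner_zero_left]
  linarith

end Aux

set_option maxHeartbeats 2000000 in
/-- The single-polytope bump construction.  Let τ = {x : ⟪wᵢ,x⟫ + bᵢ ≥ 0} be a
compact convex polytope with nonempty interior, ε > 0, v(x) = ⟪a,x⟫ + c affine, and
R = sup_{x∈τ} |v(x)|.  Then there is a two-hidden-layer ReLU network
φ(x) = σ(Σᵢ w₂ᵢ σ(⟪W₁ᵢ,x⟫ + b₁ᵢ) + b₂) with φ = v + R on the ε-interior of τ,
0 ≤ φ ≤ 2R on τ, and φ = 0 outside τ. -/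
theorem bump_construction
    (n m : ℕ) (w : Fin m → EuclideanSpace ℝ (Fin n)) (b : Fin m → ℝ)
    (hw : ∀ i, w i ≠ 0)
    (τ : Set (EuclideanSpace ℝ (Fin n)))
    (hτ : τ = {x | ∀ i, ⟪w i, x⟫ + b i ≥ 0})
    (hτc : IsCompact τ) (hτi : (interior τ).Nonempty)
    (ε : ℝ) (hε : 0 < ε)
    (a : EuclideanSpace ℝ (Fin n)) (c : ℝ)
    (R : ℝ) (hR : R = sSup ((fun x => |⟪a, x⟫ + c|) '' τ)) :
    ∃ (W₁ : Fin m → EuclideanSpace ℝ (Fin n)) (b₁ : Fin m → ℝ)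
      (w₂ : Fin m → ℝ) (b₂ : ℝ),
      (∀ x ∈ τ, ε ≤ Metric.infDist x (frontier τ) →
        max (∑ i, w₂ i * max (⟪W₁ i, x⟫ + b₁ i) 0 + b₂) 0 = ⟪a, x⟫ + c + R) ∧
      (∀ x ∈ τ,
        0 ≤ max (∑ i, w₂ i * max (⟪W₁ i, x⟫ + b₁ i) 0 + b₂) 0 ∧
        max (∑ i, w₂ i * max (⟪W₁ i, x⟫ + b₁ i) 0 + b₂) 0 ≤ 2 * R) ∧
      (∀ x ∉ τ, max (∑ i, w₂ i * max (⟪W₁ i, x⟫ + b₁ i) 0 + b₂) 0 = 0) := by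
  classical
  obtain ⟨x₀, hx₀i⟩ := hτi
  have hx₀τ : x₀ ∈ τ := interior_subset hx₀i
  have hvcont : Continuous fun x : EuclideanSpace ℝ (Fin n) => |⟪a, x⟫ + c| :=
    ((continuous_const.inner continuous_id).add continuous_const).abs
  have hbdd : BddAbove ((fun x => |⟪a, x⟫ + c|) '' τ) := (hτc.image hvcont).bddAbove
  have hvR : ∀ x ∈ τ, |⟪a, x⟫ + c| ≤ R := fun x hx => hR ▸ le_csSup hbdd ⟨x, hx, rfl⟩
  have hR0 : 0 ≤ R := le_trans (abs_nonneg _) (hvR x₀ hx₀τ)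
  rcases Nat.eq_zero_or_pos m with hm | hm
  · subst hm
    refine ⟨fun _ => 0, fun _ => 0, fun _ => 0, 0, ?_, ?_, ?_⟩
    · intro x hx hdist
      exfalso
      have hτu : τ = Set.univ := by
        rw [hτ]; ext y; simp
      rw [hτu, frontier_univ, Metric.infDist_empty] at hdist
      linarith
    · intro x hx
      simp only [Finset.univ_eq_empty, Finset.sum_empty, zero_add]
      exact ⟨le_max_right _ _, by rw [max_self]; linarith⟩
    · intro x hx
      exfalso
      apply hx
      rw [hτ]; intro i; exact absurd i.2 (by simp)
  · have hmne : Nonempty (Fin m) := ⟨⟨0, hm⟩⟩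
    -- interior ball of radius r₀ around x₀
    obtain ⟨r1, hr1, hball⟩ := Metric.isOpen_iff.mp isOpen_interior x₀ hx₀i
    set r₀ : ℝ := r1 / 2 with hr₀def
    have hr₀ : 0 < r₀ := by positivity
    have hwpos : ∀ i, 0 < ‖w i‖ := fun i => norm_pos_iff.mpr (hw i)
    have hx₀g : ∀ i, r₀ * ‖w i‖ ≤ ⟪w i, x₀⟫ + b i := by
      intro i
      have hp : x₀ - (r₀ / ‖w i‖) • w i ∈ τ := by
        apply interior_subset
        apply hball
        rw [Metric.mem_ball, dist_eq_norm]
        have : x₀ - (r₀ / ‖w i‖) • w i - x₀ = -((r₀ / ‖w i‖) • w i) := by abel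
        rw [this, norm_neg, norm_smul, Real.norm_eq_abs,
          abs_of_pos (div_pos hr₀ (hwpos i))]
        rw [div_mul_cancel₀ _ (ne_of_gt (hwpos i))]
        linarith
      rw [hτ] at hp
      have := hp i
      rw [inner_sub_right, real_inner_smul_right, real_inner_self_eq_norm_mul_norm] at this
      have hne := ne_of_gt (hwpos i)
      have hcalc : r₀ / ‖w i‖ * (‖w i‖ * ‖w i‖) = r₀ * ‖w i‖ := by field_simp
      rw [hcalc] at this
      linarith [this]
    -- bound τ in a ball
    obtain ⟨D, hD⟩ := (Metric.isBounded_iff_subset_closedBall x₀).mp hτc.isBounded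
    set D' : ℝ := max D r₀ + 1 with hD'def
    have hD'0 : 0 < D' := by
      have := le_max_right D r₀
      simp only [hD'def]; linarith
    have hDD' : D < D' := by
      have := le_max_left D r₀
      simp only [hD'def]; linarith
    have hτball : ∀ y ∈ τ, ‖y - x₀‖ ≤ D := by
      intro y hy
      have := hD hy
      rwa [Metric.mem_closedBall, dist_eq_norm] at this
    -- minimum norm of the w i
    set wmin : ℝ := Finset.univ.inf' Finset.univ_nonempty (fun i => ‖w i‖) with hwmindef
    have hwmin_le : ∀ i, wmin ≤ ‖w i‖ := fun i => Finset.inf'_le _ (Finset.mem_univ i)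
    have hwmin_pos : 0 < wmin := by
      obtain ⟨i, _, hi⟩ := Finset.exists_mem_eq_inf' Finset.univ_nonempty (fun i => ‖w i‖)
      rw [hwmindef, hi]
      exact hwpos i
    set θ : Fin m → ℝ := fun i => ε * ‖w i‖ with hθdef
    have hθpos : ∀ i, 0 < θ i := fun i => by
      simp only [hθdef]; exact mul_pos hε (hwpos i)
    set θmin : ℝ := ε * wmin with hθmindef
    have hθmin_pos : 0 < θmin := mul_pos hε hwmin_pos
    have hθmin_le : ∀ i, θmin ≤ θ i := fun i => by
      simp only [hθmindef, hθdef]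
      exact mul_le_mul_of_nonneg_left (hwmin_le i) hε.le
    set α : ℝ := r₀ * wmin / D' with hαdef
    have hα : 0 < α := by simp only [hαdef]; exact div_pos (mul_pos hr₀ hwmin_pos) hD'0
    set ρ : ℝ := max ((‖a‖ * (2 * D') + 2 * R) / θmin) (2 / α * (‖a‖ + R / D')) with hρdef
    have hρ0 : 0 ≤ ρ := le_trans (by positivity) (le_max_left _ _)
    -- recession cone is trivial
    have hrec : ∀ d : EuclideanSpace ℝ (Fin n), (∀ i, 0 ≤ ⟪w i, d⟫) → d = 0 := by
      intro d hd
      by_contra hd0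
      obtain ⟨C, hC⟩ := isBounded_iff_forall_norm_le.mp hτc.isBounded
      have hdn : 0 < ‖d‖ := norm_pos_iff.mpr hd0
      set t : ℝ := (C + ‖x₀‖ + 1) / ‖d‖ with htdef
      have ht0 : 0 ≤ t := by
        have hC0 : 0 ≤ C := le_trans (norm_nonneg _) (hC x₀ hx₀τ)
        positivity
      have hq : x₀ + t • d ∈ τ := by
        rw [hτ]
        intro i
        have h1 : (0:ℝ) ≤ ⟪w i, x₀⟫ + b i := by rw [hτ] at hx₀τ; exact hx₀τ i
        rw [inner_add_right, real_inner_smul_right]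
        have := mul_nonneg ht0 (hd i)
        linarith
      have h2 := hC _ hq
      have h3 : ‖t • d‖ ≤ ‖x₀ + t • d‖ + ‖x₀‖ := by
        have he : x₀ + t • d - x₀ = t • d := by abel
        have h4 := norm_sub_le (x₀ + t • d) x₀
        rw [he] at h4
        exact h4
      rw [norm_smul, Real.norm_eq_abs, abs_of_nonneg ht0, htdef,
        div_mul_cancel₀ _ (ne_of_gt hdn)] at h3
      linarith
    -- positive combinations
    obtain ⟨cν, hcν, hcνsum⟩ := cone_surj w hrec (-(∑ i, w i))
    set ν : Fin m → ℝ := fun i => 1 + cν i with hνdef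
    have hν1 : ∀ i, 1 ≤ ν i := fun i => by simp only [hνdef]; linarith [hcν i]
    have hνsum : ∑ i, ν i • w i = 0 := by
      simp only [hνdef, add_smul, one_smul, Finset.sum_add_distrib, hcνsum]
      abel
    obtain ⟨lam, hlam, hlamsum⟩ := cone_surj w hrec (-a)
    set μ : Fin m → ℝ := fun i => lam i + ρ * ν i with hμdef
    have hμρ : ∀ i, ρ ≤ μ i := by
      intro i
      have h1 : ρ * 1 ≤ ρ * ν i := mul_le_mul_of_nonneg_left (hν1 i) hρ0
      simp only [hμdef]
      linarith [hlam i]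
    have hμ0 : ∀ i, 0 ≤ μ i := fun i => le_trans hρ0 (hμρ i)
    have hμsum : ∑ i, μ i • w i = -a := by
      simp only [hμdef, add_smul, Finset.sum_add_distrib, hlamsum, mul_smul]
      rw [← Finset.smul_sum, hνsum, smul_zero, add_zero]
    -- the network
    have hsum_inner : ∀ x : EuclideanSpace ℝ (Fin n), ∑ i, μ i * ⟪w i, x⟫ = -⟪a, x⟫ := by
      intro x
      calc ∑ i, μ i * ⟪w i, x⟫ = ∑ i, ⟪μ i • w i, x⟫ := by
            apply Finset.sum_congr rfl
            intro i _
            rw [real_inner_smul_left]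
        _ = ⟪∑ i, μ i • w i, x⟫ := by rw [sum_inner]
        _ = ⟪-a, x⟫ := by rw [hμsum]
        _ = -⟪a, x⟫ := inner_neg_left _ _
    -- key pointwise identity
    have key : ∀ x : EuclideanSpace ℝ (Fin n),
        ∑ i, (fun _ => (-1:ℝ)) i * max (⟪(fun i => μ i • w i) i, x⟫ + (fun i => μ i * (b i - θ i)) i) 0
          + (c + R + ∑ i, μ i * (b i - θ i))
        = (⟪a, x⟫ + c + R) - ∑ i, max (μ i * (θ i - (⟪w i, x⟫ + b i))) 0 := by
      intro x
      have hterm : ∀ i : Fin m,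
          (fun _ => (-1:ℝ)) i * max (⟪(fun i => μ i • w i) i, x⟫ + (fun i => μ i * (b i - θ i)) i) 0
          = (-(μ i * ⟪w i, x⟫) - μ i * (b i - θ i)) - max (μ i * (θ i - (⟪w i, x⟫ + b i))) 0 := by
        intro i
        have h1 : ⟪μ i • w i, x⟫ + μ i * (b i - θ i) = μ i * ((⟪w i, x⟫ + b i) - θ i) := by
          rw [real_inner_smul_left]; ring
        simp only
        rw [h1]
        have h3 : μ i * (θ i - (⟪w i, x⟫ + b i)) = -(μ i * ((⟪w i, x⟫ + b i) - θ i)) := by ring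
        rw [h3]
        rcases le_total (μ i * ((⟪w i, x⟫ + b i) - θ i)) 0 with h | h
        · rw [max_eq_right h, max_eq_left (by linarith)]; ring
        · rw [max_eq_left h, max_eq_right (by linarith)]; ring
      rw [Finset.sum_congr rfl (fun i _ => hterm i)]
      rw [Finset.sum_sub_distrib, Finset.sum_sub_distrib]
      have h4 : ∑ i, -(μ i * ⟪w i, x⟫) = ⟪a, x⟫ := by
        rw [Finset.sum_neg_distrib, hsum_inner x, neg_neg]
      rw [h4]
      ring
    have hPnn : ∀ x : EuclideanSpace ℝ (Fin n),
        0 ≤ ∑ i, max (μ i * (θ i - (⟪w i, x⟫ + b i))) 0 :=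
      fun x => Finset.sum_nonneg fun i _ => le_max_right _ _
    -- margin in the ε-interior
    have hmargin : ∀ x ∈ τ, ε ≤ Metric.infDist x (frontier τ) →
        ∀ i, θ i ≤ ⟪w i, x⟫ + b i := by
      intro x hx hdist i
      by_contra hlt
      push_neg at hlt
      have hg0 : (0:ℝ) ≤ ⟪w i, x⟫ + b i := by rw [hτ] at hx; exact hx i
      have hwi := hwpos i
      set u : EuclideanSpace ℝ (Fin n) := ‖w i‖⁻¹ • w i with hudef
      have hu : ‖u‖ = 1 := by
        rw [hudef, norm_smul, Real.norm_eq_abs, abs_of_pos (inv_pos.mpr hwi),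
          inv_mul_cancel₀ (ne_of_gt hwi)]
      have hinneru : ⟪w i, u⟫ = ‖w i‖ := by
        rw [hudef, real_inner_smul_right, real_inner_self_eq_norm_mul_norm]
        field_simp
      set tt : ℝ := (⟪w i, x⟫ + b i) / ‖w i‖ with httdef
      have htt0 : 0 ≤ tt := div_nonneg hg0 hwi.le
      have httε : tt < ε := by
        rw [httdef, div_lt_iff₀ hwi]
        have : θ i = ε * ‖w i‖ := rfl
        linarith [hlt]
      have hgh : ∀ s : ℝ, ⟪w i, x - s • u⟫ + b i = (⟪w i, x⟫ + b i) - s * ‖w i‖ := by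
        intro s
        rw [inner_sub_right, real_inner_smul_right, hinneru]
        ring
      set S : Set ℝ := {s : ℝ | s ∈ Set.Icc 0 tt ∧ x - s • u ∈ τ} with hSdef
      have hScl : IsClosed S := by
        have hSeq : S = Set.Icc 0 tt ∩ ((fun s : ℝ => x - s • u) ⁻¹' τ) := rfl
        rw [hSeq]
        exact isClosed_Icc.inter (hτc.isClosed.preimage
          (continuous_const.sub (continuous_id.smul continuous_const)))
      have hSne : S.Nonempty := ⟨0, ⟨le_refl 0, htt0⟩, by simpa using hx⟩
      have hSbdd : BddAbove S := ⟨tt, fun s hs => hs.1.2⟩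
      have hs₀S : sSup S ∈ S := hScl.csSup_mem hSne hSbdd
      set s₀ : ℝ := sSup S with hs₀def
      obtain ⟨⟨hs₀0, hs₀tt⟩, hzτ⟩ := hs₀S
      set z := x - s₀ • u with hzdef
      have hznotint : z ∉ interior τ := by
        intro hzint
        obtain ⟨δ, hδ, hδball⟩ := Metric.isOpen_iff.mp isOpen_interior z hzint
        rcases lt_or_eq_of_le hs₀tt with hlt' | heq
        · set s' : ℝ := min tt (s₀ + δ / 2) with hs'def
          have hs's₀ : s₀ < s' := lt_min hlt' (by linarith)
          have hs'S : s' ∈ S := by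
            refine ⟨⟨le_trans hs₀0 hs's₀.le, min_le_left _ _⟩, ?_⟩
            apply interior_subset
            apply hδball
            rw [Metric.mem_ball, dist_eq_norm]
            have hdiff : x - s' • u - z = (s₀ - s') • u := by
              rw [hzdef, sub_smul]; abel
            rw [hdiff, norm_smul, Real.norm_eq_abs, hu, mul_one,
              abs_of_nonpos (by linarith)]
            have := min_le_right tt (s₀ + δ / 2)
            have h17 : s' ≤ s₀ + δ / 2 := this
            linarith
          have := le_csSup hSbdd hs'S
          rw [← hs₀def] at this
          linarith
        · have hgz : ⟪w i, z⟫ + b i = 0 := by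
            rw [hzdef, hgh s₀, heq, httdef]
            field_simp
            ring
          have hpball : z - (δ / 2) • u ∈ Metric.ball z δ := by
            rw [Metric.mem_ball, dist_eq_norm]
            have hdiff : z - (δ / 2) • u - z = -((δ / 2) • u) := by abel
            rw [hdiff, norm_neg, norm_smul, Real.norm_eq_abs, hu, mul_one,
              abs_of_pos (by linarith)]
            linarith
          have hpτ : z - (δ / 2) • u ∈ τ := interior_subset (hδball hpball)
          have h16 : ⟪w i, z - (δ / 2) • u⟫ + b i = (⟪w i, z⟫ + b i) - δ / 2 * ‖w i‖ := by
            rw [inner_sub_right, real_inner_smul_right, hinneru]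
            ring
          have h18 : 0 < δ / 2 * ‖w i‖ := mul_pos (by linarith) hwi
          rw [hτ] at hpτ
          have h19 := hpτ i
          rw [h16, hgz] at h19
          linarith
      have hzfr : z ∈ frontier τ := ⟨subset_closure hzτ, hznotint⟩
      have hle := Metric.infDist_le_dist_of_mem (x := x) hzfr
      have hdz : dist x z = s₀ := by
        rw [dist_eq_norm, hzdef]
        have hdiff : x - (x - s₀ • u) = s₀ • u := by abel
        rw [hdiff, norm_smul, Real.norm_eq_abs, abs_of_nonneg hs₀0, hu, mul_one]
      rw [hdz] at hle
      linarith
    refine ⟨fun i => μ i • w i, fun i => μ i * (b i - θ i), fun i => -1,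
      c + R + ∑ i, μ i * (b i - θ i), ?_, ?_, ?_⟩
    · -- on the ε-interior
      intro x hx hdist
      rw [key x]
      have hP0 : ∑ i, max (μ i * (θ i - (⟪w i, x⟫ + b i))) 0 = 0 := by
        apply Finset.sum_eq_zero
        intro i _
        have h5 := hmargin x hx hdist i
        exact max_eq_right (mul_nonpos_of_nonneg_of_nonpos (hμ0 i) (by linarith))
      rw [hP0, sub_zero]
      have h6 := (abs_le.mp (hvR x hx)).1
      exact max_eq_left (by linarith)
    · -- bounds on τ
      intro x hx
      refine ⟨le_max_right _ _, ?_⟩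
      rw [key x]
      apply max_le _ (by linarith)
      have h6 := (abs_le.mp (hvR x hx)).2
      have h7 := hPnn x
      linarith
    · -- outside τ
      intro x hx
      rw [key x]
      apply max_eq_right
      rw [hτ] at hx
      simp only [Set.mem_setOf_eq, not_forall] at hx
      obtain ⟨i0, hi0⟩ := hx
      push_neg at hi0
      -- it suffices to bound v + R by the penalty sum
      have hLHS : ⟪a, x⟫ + c ≤ ‖a‖ * ‖x - x₀‖ + R := by
        have h8 : ⟪a, x⟫ - ⟪a, x₀⟫ = ⟪a, x - x₀⟫ := (inner_sub_right _ _ _).symm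
        have h9 : ⟪a, x - x₀⟫ ≤ ‖a‖ * ‖x - x₀‖ := real_inner_le_norm _ _
        have h10 := (abs_le.mp (hvR x₀ hx₀τ)).2
        linarith
      set t : ℝ := ‖x - x₀‖ with htdef
      have hgoal : ⟪a, x⟫ + c + R ≤ ∑ i, max (μ i * (θ i - (⟪w i, x⟫ + b i))) 0 := by
        rcases le_or_gt t (2 * D') with hcase | hcase
        · -- near case
          have hterm_i0 : ρ * θmin ≤ max (μ i0 * (θ i0 - (⟪w i0, x⟫ + b i0))) 0 := by
            apply le_trans _ (le_max_left _ _)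
            have hbig : θmin ≤ θ i0 - (⟪w i0, x⟫ + b i0) := by
              have := hθmin_le i0
              linarith
            calc ρ * θmin ≤ μ i0 * (θ i0 - (⟪w i0, x⟫ + b i0)) := by
                  apply mul_le_mul (hμρ i0) hbig hθmin_pos.le (hμ0 i0)
              _ = _ := rfl
          have hsumge : ρ * θmin ≤ ∑ i, max (μ i * (θ i - (⟪w i, x⟫ + b i))) 0 :=
            le_trans hterm_i0 (Finset.single_le_sum (f := fun i => max (μ i * (θ i - (⟪w i, x⟫ + b i))) 0) (fun i _ => le_max_right _ _) (Finset.mem_univ i0))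
          have hρ1 : (‖a‖ * (2 * D') + 2 * R) / θmin ≤ ρ := le_max_left _ _
          have hρθ : ‖a‖ * (2 * D') + 2 * R ≤ ρ * θmin := by
            rw [← div_mul_cancel₀ (‖a‖ * (2 * D') + 2 * R) (ne_of_gt hθmin_pos)]
            exact mul_le_mul_of_nonneg_right hρ1 hθmin_pos.le
          have h11 : ‖a‖ * t ≤ ‖a‖ * (2 * D') := mul_le_mul_of_nonneg_left hcase (norm_nonneg a)
          linarith
        · -- far case
          have ht0 : (0:ℝ) < t := by linarith
          set y : EuclideanSpace ℝ (Fin n) := x₀ + (D' / t) • (x - x₀) with hydef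
          have hynorm : ‖y - x₀‖ = D' := by
            have h12 : y - x₀ = (D' / t) • (x - x₀) := by rw [hydef]; abel
            rw [h12, norm_smul, Real.norm_eq_abs, abs_of_pos (div_pos hD'0 ht0), ← htdef,
              div_mul_cancel₀ _ (ne_of_gt ht0)]
          have hyτ : y ∉ τ := by
            intro hym
            have := hτball y hym
            rw [hynorm] at this
            linarith
          rw [hτ] at hyτ
          simp only [Set.mem_setOf_eq, not_forall] at hyτ
          obtain ⟨j, hj⟩ := hyτ
          push_neg at hj
          have hGr : r₀ * ‖w j‖ ≤ ⟪w j, x₀⟫ + b j := hx₀g j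
          have hGpos : 0 < ⟪w j, x₀⟫ + b j := lt_of_lt_of_le (mul_pos hr₀ (hwpos j)) hGr
          have hIy : ⟪w j, y⟫ + b j = (⟪w j, x₀⟫ + b j) + (D' / t) * ⟪w j, x - x₀⟫ := by
            rw [hydef, inner_add_right, real_inner_smul_right]; ring
          rw [hIy] at hj
          have hI : ⟪w j, x - x₀⟫ * D' < -(⟪w j, x₀⟫ + b j) * t := by
            have h13 : (D' / t) * ⟪w j, x - x₀⟫ < -(⟪w j, x₀⟫ + b j) := by linarith
            have h14 := mul_lt_mul_of_pos_right h13 ht0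
            calc ⟪w j, x - x₀⟫ * D' = (D' / t) * ⟪w j, x - x₀⟫ * t := by
                  field_simp
              _ < -(⟪w j, x₀⟫ + b j) * t := h14
          have hgx : ⟪w j, x⟫ + b j = (⟪w j, x₀⟫ + b j) + ⟪w j, x - x₀⟫ := by
            rw [inner_sub_right]; ring
          have hmul : (⟪w j, x⟫ + b j) * (2 * D') ≤ -(r₀ * wmin * t) := by
            rw [hgx]
            nlinarith [mul_nonneg hGpos.le (by linarith : (0:ℝ) ≤ t - 2 * D'),
              mul_le_mul_of_nonneg_right hGr ht0.le,
              mul_le_mul_of_nonneg_right (mul_le_mul_of_nonneg_left (hwmin_le j) hr₀.le) ht0.le]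
          have h2D' : (0:ℝ) < 2 * D' := by linarith
          have hgle : ⟪w j, x⟫ + b j ≤ -(r₀ * wmin * t) / (2 * D') :=
            (le_div_iff₀ h2D').mpr hmul
          have hαt : α * t / 2 = r₀ * wmin * t / (2 * D') := by
            rw [hαdef]
            field_simp
          have hpen : α * t / 2 ≤ θ j - (⟪w j, x⟫ + b j) := by
            have h15 := hθpos j
            rw [hαt]
            have : -(r₀ * wmin * t) / (2 * D') = -(r₀ * wmin * t / (2 * D')) := by ring
            rw [this] at hgle
            linarith
          have hαt0 : 0 ≤ α * t / 2 := by positivity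
          have htermj : ρ * (α * t / 2) ≤ max (μ j * (θ j - (⟪w j, x⟫ + b j))) 0 := by
            apply le_trans _ (le_max_left _ _)
            exact mul_le_mul (hμρ j) hpen hαt0 (hμ0 j)
          have hsumge : ρ * (α * t / 2) ≤ ∑ i, max (μ i * (θ i - (⟪w i, x⟫ + b i))) 0 :=
            le_trans htermj (Finset.single_le_sum
              (f := fun i => max (μ i * (θ i - (⟪w i, x⟫ + b i))) 0)
              (fun i _ => le_max_right _ _) (Finset.mem_univ j))
          have hρ2 : 2 / α * (‖a‖ + R / D') ≤ ρ := le_max_right _ _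
          have e1 : 2 / α * (‖a‖ + R / D') * (α * t / 2) = ‖a‖ * t + R * t / D' := by
            field_simp
          have e3 : 2 * R ≤ R * t / D' := by
            rw [le_div_iff₀ hD'0]
            nlinarith [mul_nonneg hR0 (by linarith : (0:ℝ) ≤ t - 2 * D')]
          have e4 : 2 / α * (‖a‖ + R / D') * (α * t / 2) ≤ ρ * (α * t / 2) :=
            mul_le_mul_of_nonneg_right hρ2 hαt0
          rw [e1] at e4
          linarith
      linarith
end

section
/- Every nonzero function of the form f(x) = Σⱼ aⱼ σ(wⱼ·x + bⱼ) (a one-hidden-layer ReLU network on ℝⁿ, n ≥ 2) that is not identically zero is not in Lᵖ(ℝⁿ) for any 1 ≤ p < ∞; in particular, no nonzero one-hidden-layer ReLU network has compact support. -/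
open scoped RealInnerProductSpace
open MeasureTheory Filter
open scoped ENNReal NNReal

section Aux
variable {V : Type*} [NormedAddCommGroup V] [InnerProductSpace ℝ V]

lemma aux_subsingleton_scalar {c d : ℝ} (h : ¬ (c = 0 ∧ d = 0)) :
    {t : ℝ | c + t * d = 0}.Subsingleton := by
  intro t ht t' ht'
  simp only [Set.mem_setOf_eq] at ht ht'
  by_contra hne
  have hd : d = 0 := by
    have h1 : (t - t') * d = 0 := by linarith
    rcases mul_eq_zero.1 h1 with h2 | h2
    · exact absurd (sub_eq_zero.1 h2) hne
    · exact h2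
  exact h ⟨by rw [hd] at ht; linarith, hd⟩

lemma aux_subsingleton_vec {v u : V} (hv : v ≠ 0) :
    {t : ℝ | v + t • u = 0}.Subsingleton := by
  intro t ht t' ht'
  simp only [Set.mem_setOf_eq] at ht ht'
  by_contra hne
  have h1 : (t - t') • u = 0 := by
    have : t • u = t' • u := by
      have := ht.trans ht'.symm
      exact add_left_cancel this
    rw [sub_smul, this, sub_self]
  rcases smul_eq_zero.1 h1 with h2 | h2
  · exact hne (sub_eq_zero.1 h2)
  · rw [h2, smul_zero, add_zero] at ht
    exact hv ht

end Aux
section Aux2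
variable {V : Type*} [NormedAddCommGroup V] [InnerProductSpace ℝ V]

lemma aux_exists_generic {ι : Type*} [DecidableEq ι] (w₀ : V) (s : Finset ι) (u : ι → V)
    (v₀ : V) (h₀ : ⟪w₀, v₀⟫ = 0) (hv₀ : v₀ ≠ 0) :
    (∀ k ∈ s, ⟪w₀, u k⟫ = 0 ∧ u k ≠ 0) →
    ∃ v : V, ⟪w₀, v⟫ = 0 ∧ v ≠ 0 ∧ ∀ k ∈ s, ⟪u k, v⟫ ≠ 0 := by
  classical
  induction s using Finset.induction_on with
  | empty => exact fun _ => ⟨v₀, h₀, hv₀, by simp⟩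
  | @insert a s ha ih =>
    intro hu
    obtain ⟨v, hvw, hvne, hvs⟩ := ih (fun k hk => hu k (Finset.mem_insert_of_mem hk))
    have hua := hu a (Finset.mem_insert_self a s)
    set T : Set ℝ := {t | v + t • u a = 0} ∪ ({t | ⟪u a, v⟫ + t * ⟪u a, u a⟫ = 0} ∪
      ⋃ i ∈ s, {t | ⟪u i, v⟫ + t * ⟪u i, u a⟫ = 0}) with hT
    have hTfin : T.Finite := by
      refine Set.Finite.union (aux_subsingleton_vec hvne).finite (Set.Finite.union ?_ ?_)
      · refine (aux_subsingleton_scalar ?_).finite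
        rintro ⟨-, h2⟩
        exact hua.2 (inner_self_eq_zero.1 h2)
      · refine Set.Finite.biUnion s.finite_toSet (fun i hi => ?_)
        refine (aux_subsingleton_scalar ?_).finite
        rintro ⟨h1, -⟩
        exact hvs i hi h1
    obtain ⟨t, ht⟩ := hTfin.exists_notMem
    refine ⟨v + t • u a, ?_, ?_, ?_⟩
    · rw [inner_add_right, inner_smul_right, hvw, hua.1]; ring
    · exact fun h => ht (Set.mem_union_left _ h)
    · intro k hk
      rcases Finset.mem_insert.1 hk with rfl | hks
      · intro h
        apply ht
        refine Set.mem_union_right _ (Set.mem_union_left _ ?_)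
        rw [inner_add_right, inner_smul_right] at h
        exact h
      · intro h
        apply ht
        refine Set.mem_union_right _ (Set.mem_union_right _ ?_)
        rw [Set.mem_iUnion₂]
        refine ⟨k, hks, ?_⟩
        rw [inner_add_right, inner_smul_right] at h
        exact h

lemma aux_exists_perp_generic [FiniteDimensional ℝ V] (h2 : 2 ≤ Module.finrank ℝ V)
    {m : ℕ} (w : Fin m → V) (j₀ : Fin m) (hj₀ : w j₀ ≠ 0) :
    ∃ v : V, v ≠ 0 ∧ ⟪w j₀, v⟫ = 0 ∧
      ∀ k, w k ∉ Submodule.span ℝ {w j₀} → ⟪w k, v⟫ ≠ 0 := by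
  classical
  set w₀ := w j₀ with hw₀
  set K : Submodule ℝ V := Submodule.span ℝ {w₀} with hK
  have hKrank : Module.finrank ℝ K = 1 := finrank_span_singleton hj₀
  have hKorth : Kᗮ ≠ ⊥ := by
    intro hbot
    have := Submodule.finrank_add_finrank_orthogonal (K := K)
    rw [hbot, hKrank, finrank_bot] at this
    omega
  obtain ⟨v₀, hv₀K, hv₀⟩ := Submodule.ne_bot_iff _ |>.1 hKorth
  have h₀ : ⟪w₀, v₀⟫ = 0 :=
    (Submodule.mem_orthogonal K v₀).1 hv₀K w₀ (Submodule.mem_span_singleton_self w₀)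
  have h00 : ⟪w₀, w₀⟫ ≠ 0 := fun h => hj₀ (inner_self_eq_zero.1 h)
  set u : Fin m → V := fun k => w k - (⟪w₀, w k⟫ / ⟪w₀, w₀⟫) • w₀ with hu
  set s : Finset (Fin m) := Finset.univ.filter (fun k => w k ∉ K) with hs
  have hugood : ∀ k ∈ s, ⟪w₀, u k⟫ = 0 ∧ u k ≠ 0 := by
    intro k hk
    have hknot : w k ∉ K := (Finset.mem_filter.1 hk).2
    constructor
    · rw [hu]; simp only [inner_sub_right, inner_smul_right]
      field_simp
      ring
    · intro h
      apply hknot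
      rw [hu] at h
      simp only [sub_eq_zero] at h
      rw [hK]
      exact (Submodule.mem_span_singleton).2 ⟨_, h.symm⟩
  obtain ⟨v, hvw, hvne, hvs⟩ := aux_exists_generic w₀ s u v₀ h₀ hv₀ hugood
  refine ⟨v, hvne, hvw, ?_⟩
  intro k hk
  have hks : k ∈ s := Finset.mem_filter.2 ⟨Finset.mem_univ _, hk⟩
  have := hvs k hks
  intro h
  apply this
  rw [hu]
  simp only [inner_sub_left, real_inner_smul_left]
  rw [h, hvw]
  ring

end Aux2
section Aux3
variable {V : Type*} [NormedAddCommGroup V] [InnerProductSpace ℝ V]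

lemma aux_ray_eventually {m : ℕ} (a : Fin m → ℝ) (w : Fin m → V) (b : Fin m → ℝ) (v x : V) :
    ∀ᶠ t : ℝ in atTop,
      ∑ j, a j * max (⟪w j, x + t • v⟫ + b j) 0 =
        t * (∑ j ∈ Finset.univ.filter (fun j => 0 < ⟪w j, v⟫), a j * ⟪w j, v⟫) +
        ((∑ j ∈ Finset.univ.filter (fun j => 0 < ⟪w j, v⟫), a j * (⟪w j, x⟫ + b j)) +
         ∑ j ∈ Finset.univ.filter (fun j => ⟪w j, v⟫ = 0), a j * max (⟪w j, x⟫ + b j) 0) := by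
  classical
  have h : ∀ᶠ t : ℝ in atTop, ∀ j, max (⟪w j, x + t • v⟫ + b j) 0 =
      if 0 < ⟪w j, v⟫ then (⟪w j, x⟫ + b j) + t * ⟪w j, v⟫
      else if ⟪w j, v⟫ = 0 then max (⟪w j, x⟫ + b j) 0 else 0 := by
    rw [eventually_all]
    intro j
    rcases lt_trichotomy (⟪w j, v⟫ : ℝ) 0 with hj | hj | hj
    · filter_upwards [eventually_ge_atTop ((-(⟪w j, x⟫ + b j)) / ⟪w j, v⟫)] with t ht
      rw [if_neg (by linarith), if_neg (by linarith)]
      have h1 : ⟪w j, x + t • v⟫ + b j ≤ 0 := by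
        rw [inner_add_right, real_inner_smul_right]
        have := (div_le_iff_of_neg hj).1 ht
        linarith
      exact max_eq_right h1
    · filter_upwards with t
      rw [if_neg (by rw [hj]; exact lt_irrefl 0), if_pos hj,
        inner_add_right, real_inner_smul_right, hj, mul_zero, add_zero]
    · filter_upwards [eventually_ge_atTop ((-(⟪w j, x⟫ + b j)) / ⟪w j, v⟫)] with t ht
      rw [if_pos hj]
      have h1 : 0 ≤ ⟪w j, x⟫ + b j + t * ⟪w j, v⟫ := by
        rw [div_le_iff₀ hj] at ht
        linarith
      rw [inner_add_right, real_inner_smul_right, max_eq_left (by linarith)]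
      ring
  filter_upwards [h] with t ht
  calc ∑ j, a j * max (⟪w j, x + t • v⟫ + b j) 0
      = ∑ j : Fin m, (t * (if 0 < ⟪w j, v⟫ then a j * ⟪w j, v⟫ else 0) +
          ((if 0 < ⟪w j, v⟫ then a j * (⟪w j, x⟫ + b j) else 0) +
           (if ⟪w j, v⟫ = 0 then a j * max (⟪w j, x⟫ + b j) 0 else 0))) := by
        refine Finset.sum_congr rfl (fun j _ => ?_)
        rw [ht j]
        split_ifs with h1 h2
        · exact absurd h1 (by rw [h2]; exact lt_irrefl 0)
        · ring
        · ring
        · ring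
    _ = _ := by
        rw [Finset.sum_add_distrib, Finset.sum_add_distrib, ← Finset.mul_sum,
          ← Finset.sum_filter, ← Finset.sum_filter, ← Finset.sum_filter]

lemma aux_affine_zero_of_decay {α β : ℝ} (h : ∀ ε > 0, ∃ T, ∀ t ≥ T, |t * α + β| < ε) :
    α = 0 ∧ β = 0 := by
  have hα : α = 0 := by
    by_contra hα
    obtain ⟨T, hT⟩ := h 1 one_pos
    have habs : 0 < |α| := abs_pos.2 hα
    have h1 := hT T le_rfl
    have h2 := hT (T + 3 / |α|) (le_add_of_nonneg_right (by positivity))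
    have key : (T + 3 / |α|) * α + β - (T * α + β) = 3 / |α| * α := by ring
    have h3 : |3 / |α| * α| = 3 := by
      rw [abs_mul, abs_div, abs_abs, abs_of_pos (by norm_num : (0:ℝ) < 3)]
      field_simp
    have h4 : |(T + 3 / |α|) * α + β - (T * α + β)| ≤
        |(T + 3 / |α|) * α + β| + |T * α + β| := abs_sub _ _
    rw [key, h3] at h4
    linarith
  refine ⟨hα, ?_⟩
  by_contra hβ
  obtain ⟨T, hT⟩ := h (|β| / 2) (by positivity)
  have := hT T le_rfl
  rw [hα, mul_zero, zero_add] at this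
  have := abs_nonneg β
  linarith

end Aux3
section Aux4

lemma aux_sum_relu_eq_zero {n m : ℕ} (hn : 2 ≤ n)
    (a : Fin m → ℝ) (w : Fin m → EuclideanSpace ℝ (Fin n)) (b : Fin m → ℝ)
    (hdecay : ∀ ε > 0, ∃ R : ℝ, ∀ y : EuclideanSpace ℝ (Fin n), R ≤ ‖y‖ →
      |∑ j, a j * max (⟪w j, y⟫ + b j) 0| < ε)
    (x : EuclideanSpace ℝ (Fin n)) :
    ∑ j, a j * max (⟪w j, x⟫ + b j) 0 = 0 := by
  classical
  have hfr : 2 ≤ Module.finrank ℝ (EuclideanSpace ℝ (Fin n)) := by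
    rw [finrank_euclideanSpace_fin]; exact hn
  -- Step 1: ray decay
  have hray : ∀ v : EuclideanSpace ℝ (Fin n), v ≠ 0 → ∀ y : EuclideanSpace ℝ (Fin n),
      (∑ j ∈ Finset.univ.filter (fun j => 0 < ⟪w j, v⟫), a j * (⟪w j, y⟫ + b j)) +
        ∑ j ∈ Finset.univ.filter (fun j => ⟪w j, v⟫ = 0), a j * max (⟪w j, y⟫ + b j) 0 = 0 := by
    intro v hv y
    have hev := aux_ray_eventually a w b v y
    set α := ∑ j ∈ Finset.univ.filter (fun j => 0 < ⟪w j, v⟫), a j * ⟪w j, v⟫ with hα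
    set β := (∑ j ∈ Finset.univ.filter (fun j => 0 < ⟪w j, v⟫), a j * (⟪w j, y⟫ + b j)) +
        ∑ j ∈ Finset.univ.filter (fun j => ⟪w j, v⟫ = 0), a j * max (⟪w j, y⟫ + b j) 0 with hβ
    have hd : ∀ ε > 0, ∃ T, ∀ t ≥ T, |t * α + β| < ε := by
      intro ε hε
      obtain ⟨R, hR⟩ := hdecay ε hε
      obtain ⟨T₀, hT₀⟩ := hev.exists_forall_of_atTop
      have hvpos : (0:ℝ) < ‖v‖ := norm_pos_iff.2 hv
      refine ⟨max T₀ (max 0 ((max R 0 + ‖y‖) / ‖v‖)), fun t ht => ?_⟩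
      have ht0 : (0:ℝ) ≤ t := le_trans (le_trans (le_max_left _ _) (le_max_right _ _)) ht
      have ht1 : (max R 0 + ‖y‖) / ‖v‖ ≤ t :=
        le_trans (le_trans (le_max_right _ _) (le_max_right _ _)) ht
      have ht2 : max R 0 + ‖y‖ ≤ t * ‖v‖ := (div_le_iff₀ hvpos).1 ht1
      have hnorm : R ≤ ‖y + t • v‖ := by
        have h3 : ‖t • v‖ - ‖y‖ ≤ ‖y + t • v‖ := by
          have h4 := norm_sub_le (y + t • v) y
          rw [add_sub_cancel_left] at h4
          linarith
        rw [norm_smul, Real.norm_eq_abs, abs_of_nonneg ht0] at h3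
        have : R ≤ max R 0 := le_max_left _ _
        linarith
      have := hR _ hnorm
      rwa [hT₀ t (le_trans (le_max_left _ _) ht)] at this
    exact (aux_affine_zero_of_decay hd).2
  -- Step 2: zero-class sums are constants
  have hzero : ∀ y : EuclideanSpace ℝ (Fin n), ∑ j ∈ Finset.univ.filter (fun k => w k = 0),
      a j * max (⟪w j, y⟫ + b j) 0 =
      ∑ j ∈ Finset.univ.filter (fun k => w k = 0), a j * max (b j) 0 := by
    intro y
    refine Finset.sum_congr rfl (fun j hj => ?_)
    rw [(Finset.mem_filter.1 hj).2, inner_zero_left, zero_add]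
  -- Step 3: class sums are affine
  have hclass : ∀ j₀ : Fin m, w j₀ ≠ 0 → ∃ (c : EuclideanSpace ℝ (Fin n)) (d : ℝ), ∀ y : EuclideanSpace ℝ (Fin n),
      ∑ j ∈ Finset.univ.filter (fun k => w k ∈ Submodule.span ℝ {w j₀}),
        a j * max (⟪w j, y⟫ + b j) 0 = ⟪c, y⟫ + d := by
    intro j₀ hj₀
    obtain ⟨v, hvne, hv0, hvgen⟩ := aux_exists_perp_generic hfr w j₀ hj₀
    have hZ : Finset.univ.filter (fun k => (⟪w k, v⟫ : ℝ) = 0) =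
        Finset.univ.filter (fun k => w k ∈ Submodule.span ℝ {w j₀}) := by
      ext k
      simp only [Finset.mem_filter, Finset.mem_univ, true_and]
      constructor
      · intro h
        by_contra hs
        exact hvgen k hs h
      · intro h
        obtain ⟨c, hc⟩ := Submodule.mem_span_singleton.1 h
        rw [← hc, real_inner_smul_left, hv0, mul_zero]
    refine ⟨∑ j ∈ Finset.univ.filter (fun k => 0 < (⟪w k, v⟫ : ℝ)), (-(a j)) • w j,
      -(∑ j ∈ Finset.univ.filter (fun k => 0 < (⟪w k, v⟫ : ℝ)), a j * b j), fun y => ?_⟩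
    have hr := hray v hvne y
    rw [hZ] at hr
    have hinner : ⟪(∑ j ∈ Finset.univ.filter (fun k => 0 < (⟪w k, v⟫ : ℝ)),
        (-(a j)) • w j : EuclideanSpace ℝ (Fin n)), y⟫ =
        ∑ j ∈ Finset.univ.filter (fun k => 0 < (⟪w k, v⟫ : ℝ)), (-(a j)) * ⟪w j, y⟫ := by
      rw [sum_inner]
      exact Finset.sum_congr rfl (fun j _ => real_inner_smul_left _ _ _)
    rw [hinner]
    have hexp : ∑ j ∈ Finset.univ.filter (fun k => 0 < (⟪w k, v⟫ : ℝ)),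
        a j * (⟪w j, y⟫ + b j) =
        (∑ j ∈ Finset.univ.filter (fun k => 0 < (⟪w k, v⟫ : ℝ)), a j * ⟪w j, y⟫) +
        ∑ j ∈ Finset.univ.filter (fun k => 0 < (⟪w k, v⟫ : ℝ)), a j * b j := by
      rw [← Finset.sum_add_distrib]
      exact Finset.sum_congr rfl (fun j _ => by ring)
    rw [hexp] at hr
    have hneg : ∑ j ∈ Finset.univ.filter (fun k => 0 < (⟪w k, v⟫ : ℝ)), (-(a j)) * ⟪w j, y⟫ =
        -∑ j ∈ Finset.univ.filter (fun k => 0 < (⟪w k, v⟫ : ℝ)), a j * ⟪w j, y⟫ := by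
      rw [← Finset.sum_neg_distrib]
      exact Finset.sum_congr rfl (fun j _ => by ring)
    rw [hneg]
    linarith
  -- Step 4: fiberwise assembly
  have hfib : ∀ y : EuclideanSpace ℝ (Fin n), ∑ j, a j * max (⟪w j, y⟫ + b j) 0 =
      ∑ L ∈ Finset.univ.image (fun j => Submodule.span ℝ {w j}),
        ∑ j ∈ Finset.univ.filter (fun j => Submodule.span ℝ {w j} = L),
          a j * max (⟪w j, y⟫ + b j) 0 := by
    intro y
    exact (Finset.sum_fiberwise_of_maps_to
      (fun j _ => Finset.mem_image_of_mem _ (Finset.mem_univ j)) _).symm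
  have haff : ∀ L ∈ Finset.univ.image (fun j => Submodule.span ℝ {w j}),
      ∃ (c : EuclideanSpace ℝ (Fin n)) (d : ℝ), ∀ y : EuclideanSpace ℝ (Fin n),
        ∑ j ∈ Finset.univ.filter (fun j => Submodule.span ℝ {w j} = L),
          a j * max (⟪w j, y⟫ + b j) 0 = ⟪c, y⟫ + d := by
    intro L hL
    obtain ⟨j₀, -, hj₀L⟩ := Finset.mem_image.1 hL
    by_cases h0 : w j₀ = 0
    · have hLbot : L = ⊥ := by
        rw [← hj₀L, h0, Submodule.span_singleton_eq_bot]
      refine ⟨0, ∑ j ∈ Finset.univ.filter (fun k => w k = 0), a j * max (b j) 0, fun y => ?_⟩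
      have hfilter : Finset.univ.filter (fun j => Submodule.span ℝ {w j} = L) =
          Finset.univ.filter (fun k => w k = 0) := by
        ext k
        simp [hLbot, Submodule.span_singleton_eq_bot]
      rw [hfilter, hzero y, inner_zero_left, zero_add]
    · obtain ⟨c, d, hcd⟩ := hclass j₀ h0
      refine ⟨c, d - ∑ j ∈ Finset.univ.filter (fun k => w k = 0), a j * max (b j) 0,
        fun y => ?_⟩
      have hsplit : Finset.univ.filter (fun k => w k ∈ Submodule.span ℝ {w j₀}) =
          (Finset.univ.filter (fun j => Submodule.span ℝ {w j} = L)) ∪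
          (Finset.univ.filter (fun k => w k = 0)) := by
        ext k
        simp only [Finset.mem_filter, Finset.mem_univ, true_and, Finset.mem_union]
        constructor
        · intro h
          by_cases hk0 : w k = 0
          · exact Or.inr hk0
          · left
            rw [← hj₀L]
            obtain ⟨cc, hcc⟩ := Submodule.mem_span_singleton.1 h
            have hcc0 : cc ≠ 0 := by
              rintro rfl
              rw [zero_smul] at hcc
              exact hk0 hcc.symm
            apply le_antisymm
            · rw [Submodule.span_le, Set.singleton_subset_iff]
              exact SetLike.mem_coe.2 h
            · rw [Submodule.span_le, Set.singleton_subset_iff]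
              refine SetLike.mem_coe.2 (Submodule.mem_span_singleton.2 ⟨cc⁻¹, ?_⟩)
              rw [← hcc, smul_smul, inv_mul_cancel₀ hcc0, one_smul]
        · rintro (h | h)
          · rw [← hj₀L] at h
            rw [← h]
            exact Submodule.mem_span_singleton_self _
          · rw [h]
            exact Submodule.zero_mem _
      have hdisj : Disjoint (Finset.univ.filter (fun j => Submodule.span ℝ {w j} = L))
          (Finset.univ.filter (fun k => w k = 0)) := by
        rw [Finset.disjoint_left]
        intro k hk1 hk2
        have h1 := (Finset.mem_filter.1 hk1).2
        have h2 := (Finset.mem_filter.1 hk2).2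
        rw [h2, Submodule.span_singleton_eq_bot.2 rfl] at h1
        rw [← hj₀L] at h1
        exact h0 (Submodule.span_singleton_eq_bot.1 h1.symm)
      have := hcd y
      rw [hsplit, Finset.sum_union hdisj, hzero y] at this
      linarith
  -- Step 5: total function is affine
  have hAffSum : ∃ (c : EuclideanSpace ℝ (Fin n)) (d : ℝ), ∀ y : EuclideanSpace ℝ (Fin n),
      ∑ j, a j * max (⟪w j, y⟫ + b j) 0 = ⟪c, y⟫ + d := by
    set G : Submodule ℝ (EuclideanSpace ℝ (Fin n)) → (EuclideanSpace ℝ (Fin n) → ℝ) := fun L => fun y =>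
      ∑ j ∈ Finset.univ.filter (fun j => Submodule.span ℝ {w j} = L),
        a j * max (⟪w j, y⟫ + b j) 0 with hG
    have key : ∃ (c : EuclideanSpace ℝ (Fin n)) (d : ℝ), ∀ y : EuclideanSpace ℝ (Fin n),
        (∑ L ∈ Finset.univ.image (fun j => Submodule.span ℝ {w j}), G L) y = ⟪c, y⟫ + d := by
      refine Finset.sum_induction G (fun g => ∃ (c : EuclideanSpace ℝ (Fin n)) (d : ℝ), ∀ y : EuclideanSpace ℝ (Fin n), g y = ⟪c, y⟫ + d)
        ?_ ⟨0, 0, fun y => by simp⟩ haff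
      rintro g₁ g₂ ⟨c₁, d₁, h₁⟩ ⟨c₂, d₂, h₂⟩
      refine ⟨c₁ + c₂, d₁ + d₂, fun y => ?_⟩
      simp only [Pi.add_apply, h₁ y, h₂ y, inner_add_left]
      ring
    obtain ⟨c, d, hcd⟩ := key
    refine ⟨c, d, fun y => ?_⟩
    rw [hfib y, ← hcd y, Finset.sum_apply]
  -- Step 6: affine + decay ⇒ zero
  obtain ⟨c, d, hcd⟩ := hAffSum
  have hc : c = 0 := by
    by_contra hc
    obtain ⟨R, hR⟩ := hdecay 1 one_pos
    have hcpos : 0 < ‖c‖ := norm_pos_iff.2 hc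
    set t := max (max R 0 / ‖c‖) ((|d| + 1) / ‖c‖ ^ 2) with htdef
    have ht1 : max R 0 / ‖c‖ ≤ t := le_max_left _ _
    have ht2 : (|d| + 1) / ‖c‖ ^ 2 ≤ t := le_max_right _ _
    have htnn : 0 ≤ t := le_trans (by positivity) ht1
    have hxnorm : R ≤ ‖t • c‖ := by
      rw [norm_smul, Real.norm_eq_abs, abs_of_nonneg htnn]
      have := (div_le_iff₀ hcpos).1 ht1
      have h2 : R ≤ max R 0 := le_max_left _ _
      linarith
    have h3 := hR (t • c) hxnorm
    rw [hcd, real_inner_smul_right, real_inner_self_eq_norm_sq] at h3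
    have h4 : |d| + 1 ≤ t * ‖c‖ ^ 2 := (div_le_iff₀ (by positivity)).1 ht2
    have h5 : -|d| ≤ d := neg_abs_le d
    have h6 : (1:ℝ) ≤ t * ‖c‖ ^ 2 + d := by linarith
    have := le_abs_self (t * ‖c‖ ^ 2 + d)
    linarith
  have hd0 : d = 0 := by
    by_contra hd
    obtain ⟨R, hR⟩ := hdecay (|d| / 2) (by positivity)
    have hnn : (0:ℕ) < n := by omega
    set e : EuclideanSpace ℝ (Fin n) := EuclideanSpace.single (⟨0, hnn⟩ : Fin n) (1:ℝ) with he
    have hnorme : ‖e‖ = 1 := by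
      rw [he, EuclideanSpace.norm_single, norm_one]
    set y : EuclideanSpace ℝ (Fin n) := (max R 0 + 1) • e with hy
    have hynorm : R ≤ ‖y‖ := by
      rw [hy, norm_smul, Real.norm_eq_abs, hnorme, mul_one,
        abs_of_nonneg (by positivity : (0:ℝ) ≤ max R 0 + 1)]
      have : R ≤ max R 0 := le_max_left _ _
      linarith
    have := hR y hynorm
    rw [hcd, hc, inner_zero_left, zero_add] at this
    have := abs_pos.2 hd
    linarith
  rw [hcd x, hc, hd0, inner_zero_left, zero_add]

end Aux4
/-- For n ≥ 2, a one-hidden-layer ReLU network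
f(x) = Σⱼ aⱼ σ(⟪wⱼ,x⟫ + bⱼ) that is not identically zero is not in Lᵖ(ℝⁿ) for any
1 ≤ p < ∞; in particular it does not have compact support. -/
theorem one_hidden_layer_not_Lp
    (n m : ℕ) (hn : 2 ≤ n)
    (a : Fin m → ℝ) (w : Fin m → EuclideanSpace ℝ (Fin n)) (b : Fin m → ℝ)
    (f : EuclideanSpace ℝ (Fin n) → ℝ)
    (hf : f = fun x => ∑ j, a j * max (⟪w j, x⟫ + b j) 0)
    (hne : f ≠ 0) :
    (∀ p : ℝ, 1 ≤ p → ¬ MemLp f (ENNReal.ofReal p) (volume : Measure (EuclideanSpace ℝ (Fin n))))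
    ∧ ¬ HasCompactSupport f := by
  classical
  -- continuity
  have hcont : Continuous f := by
    rw [hf]
    refine continuous_finset_sum _ (fun j _ => Continuous.mul continuous_const ?_)
    exact (((Continuous.inner continuous_const continuous_id).add continuous_const).max
      continuous_const)
  -- Lipschitz bound
  set L : ℝ := ∑ j, |a j| * ‖w j‖ with hLdef
  have hL0 : 0 ≤ L := Finset.sum_nonneg (fun j _ => by positivity)
  have hlip : ∀ x y : EuclideanSpace ℝ (Fin n), |f x - f y| ≤ L * ‖x - y‖ := by
    intro x y
    rw [hf]
    simp only
    rw [← Finset.sum_sub_distrib]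
    refine le_trans (Finset.abs_sum_le_sum_abs _ _) ?_
    rw [Finset.sum_mul]
    refine Finset.sum_le_sum (fun j _ => ?_)
    have heq : a j * max (⟪w j, x⟫ + b j) 0 - a j * max (⟪w j, y⟫ + b j) 0 =
        a j * (max (⟪w j, x⟫ + b j) 0 - max (⟪w j, y⟫ + b j) 0) := by ring
    rw [heq, abs_mul]
    have h1 : |max (⟪w j, x⟫ + b j) 0 - max (⟪w j, y⟫ + b j) 0| ≤
        |(⟪w j, x⟫ + b j) - (⟪w j, y⟫ + b j)| := abs_max_sub_max_le_abs _ _ _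
    have h2 : (⟪w j, x⟫ + b j) - (⟪w j, y⟫ + b j) = ⟪w j, x - y⟫ := by
      rw [inner_sub_right]; ring
    have h3 : |⟪w j, x - y⟫| ≤ ‖w j‖ * ‖x - y‖ := abs_real_inner_le_norm _ _
    rw [h2] at h1
    calc |a j| * |max (⟪w j, x⟫ + b j) 0 - max (⟪w j, y⟫ + b j) 0|
        ≤ |a j| * (‖w j‖ * ‖x - y‖) :=
          mul_le_mul_of_nonneg_left (h1.trans h3) (abs_nonneg _)
      _ = |a j| * ‖w j‖ * ‖x - y‖ := by ring
  -- key: f does not vanish at infinity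
  have key : ∃ ε > 0, ∀ R : ℝ, ∃ x : EuclideanSpace ℝ (Fin n), R ≤ ‖x‖ ∧ ε ≤ |f x| := by
    by_contra hkey
    push_neg at hkey
    apply hne
    funext x
    show f x = 0
    rw [hf]
    refine aux_sum_relu_eq_zero hn a w b ?_ x
    intro ε hε
    obtain ⟨R, hR⟩ := hkey ε hε
    refine ⟨R, fun y hy => ?_⟩
    have := hR y hy
    rwa [hf] at this
  obtain ⟨ε, hε, hkey⟩ := key
  set δ : ℝ := ε / (2 * (L + 1)) with hδdef
  have hδpos : 0 < δ := by positivity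
  have hLδ : L * δ ≤ ε / 2 := by
    rw [hδdef]
    have heq : L * (ε / (2 * (L + 1))) = ε / 2 * (L / (L + 1)) := by
      field_simp
    rw [heq]
    have : L / (L + 1) ≤ 1 := by
      rw [div_le_one (by linarith)]
      linarith
    calc ε / 2 * (L / (L + 1)) ≤ ε / 2 * 1 :=
        mul_le_mul_of_nonneg_left this (by positivity)
      _ = ε / 2 := mul_one _
  -- lower bound on |f| near the witness points
  have hball_bound : ∀ R : ℝ, ∃ x : EuclideanSpace ℝ (Fin n),
      (∀ y ∈ Metric.ball x δ, R ≤ ‖y‖ ∧ ε / 2 ≤ |f y|) := by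
    intro R
    obtain ⟨x, hx1, hx2⟩ := hkey (R + δ)
    refine ⟨x, fun y hy => ?_⟩
    have hdist : ‖x - y‖ < δ := by
      rw [← dist_eq_norm, dist_comm]
      exact Metric.mem_ball.1 hy
    constructor
    · have := norm_sub_norm_le x y
      rw [← dist_eq_norm] at this hdist
      linarith [this, hdist]
    · have hd := hlip x y
      have : |f x| - |f y| ≤ |f x - f y| := abs_sub_abs_le_abs_sub _ _
      have h4 : L * ‖x - y‖ ≤ L * δ := mul_le_mul_of_nonneg_left hdist.le hL0
      linarith
  constructor
  · -- not in Lp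
    intro p hp hmem
    set q : ℝ≥0∞ := ENNReal.ofReal p with hq
    have hq0 : q ≠ 0 := by
      simp only [hq, ne_eq, ENNReal.ofReal_eq_zero, not_le]
      linarith
    have hqt : q ≠ ⊤ := ENNReal.ofReal_ne_top
    have hqr : q.toReal = p := ENNReal.toReal_ofReal (by linarith)
    have hint : ∫⁻ x, (‖f x‖₊ : ℝ≥0∞) ^ p ∂(volume : Measure (EuclideanSpace ℝ (Fin n))) < ⊤ := by
      have := lintegral_rpow_enorm_lt_top_of_eLpNorm_lt_top hq0 hqt hmem.eLpNorm_lt_top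
      rwa [hqr] at this
    set g : EuclideanSpace ℝ (Fin n) → ℝ≥0∞ := fun x => (‖f x‖₊ : ℝ≥0∞) ^ p with hg
    have hgm : Measurable g := hcont.measurable.enorm.pow_const p
    set ν : Measure (EuclideanSpace ℝ (Fin n)) := volume.withDensity g with hν
    have hνuniv : ν Set.univ < ⊤ := by
      rw [hν, withDensity_apply _ MeasurableSet.univ, setLIntegral_univ]
      exact hint
    set S : ℕ → Set (EuclideanSpace ℝ (Fin n)) := fun k => {x | (k : ℝ) ≤ ‖x‖} with hS
    have hSm : ∀ k, MeasurableSet (S k) :=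
      fun k => (isClosed_le continuous_const continuous_norm).measurableSet
    have hSanti : Antitone S := by
      intro i j hij x hx
      have : (i : ℝ) ≤ (j : ℝ) := Nat.cast_le.2 hij
      exact le_trans this hx
    have hScap : ⋂ k, S k = ∅ := by
      rw [Set.eq_empty_iff_forall_notMem]
      intro x hx
      obtain ⟨k, hk⟩ := exists_nat_gt ‖x‖
      have h2 : (k : ℝ) ≤ ‖x‖ := Set.mem_iInter.1 hx k
      exact absurd h2 (not_le.2 hk)
    have htends := tendsto_measure_iInter_atTop (fun k => (hSm k).nullMeasurableSet) hSanti
      ⟨0, (lt_of_le_of_lt (measure_mono (Set.subset_univ _)) hνuniv).ne⟩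
    rw [hScap, measure_empty] at htends
    set c0 : ℝ≥0∞ := ENNReal.ofReal ((ε / 2) ^ p) * volume (Metric.ball (0 : EuclideanSpace ℝ (Fin n)) δ)
      with hc0def
    have hc0 : c0 ≠ 0 := by
      refine mul_ne_zero ?_ ?_
      · simp only [ne_eq, ENNReal.ofReal_eq_zero, not_le]
        positivity
      · exact (Metric.measure_ball_pos _ _ hδpos).ne'
    have hlow : ∀ k : ℕ, c0 ≤ ν (S k) := by
      intro k
      obtain ⟨x, hx⟩ := hball_bound (k : ℝ)
      have hball : Metric.ball x δ ⊆ S k := fun y hy => (hx y hy).1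
      have hfball : ∀ y ∈ Metric.ball x δ, ENNReal.ofReal ((ε / 2) ^ p) ≤ g y := by
        intro y hy
        have hfy : ε / 2 ≤ |f y| := (hx y hy).2
        have h1 : ENNReal.ofReal (ε / 2) ≤ (‖f y‖₊ : ℝ≥0∞) := by
          rw [← enorm_eq_nnnorm, ← ofReal_norm]
          exact ENNReal.ofReal_le_ofReal (by rwa [Real.norm_eq_abs])
        calc ENNReal.ofReal ((ε / 2) ^ p) = (ENNReal.ofReal (ε / 2)) ^ p :=
            (ENNReal.ofReal_rpow_of_pos (by positivity)).symm
          _ ≤ (‖f y‖₊ : ℝ≥0∞) ^ p := ENNReal.rpow_le_rpow h1 (by linarith)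
      calc c0 = ENNReal.ofReal ((ε / 2) ^ p) * volume (Metric.ball x δ) := by
            rw [hc0def, Measure.addHaar_ball_center volume x δ]
        _ = ∫⁻ _ in Metric.ball x δ, ENNReal.ofReal ((ε / 2) ^ p) ∂volume :=
            (setLIntegral_const _ _).symm
        _ ≤ ∫⁻ y in Metric.ball x δ, g y ∂volume := setLIntegral_mono hgm hfball
        _ ≤ ∫⁻ y in S k, g y ∂volume := lintegral_mono_set hball
        _ = ν (S k) := (withDensity_apply _ (hSm k)).symm
    have hc0le : c0 ≤ 0 := ge_of_tendsto' htends hlow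
    exact hc0 (le_antisymm hc0le zero_le)
  · -- not compactly supported
    intro hcs
    obtain ⟨R, hR⟩ := hcs.isBounded.subset_closedBall 0
    obtain ⟨x, hx1, hx2⟩ := hkey (R + 1)
    have hxnot : x ∉ tsupport f := by
      intro hmem
      have := hR hmem
      rw [Metric.mem_closedBall, dist_zero_right] at this
      linarith
    rw [image_eq_zero_of_notMem_tsupport hxnot, abs_zero] at hx2
    linarith
end

section
/- For any function v ∈ Lᵖ(ℝⁿ) with 1 ≤ p < ∞ and any δ > 0, there exists a two-hidden-layer ReLU neural network f (of the form f(x) = w₃ σ(W₂ σ(W₁x + b₁) + b₂) with finitely many neurons) that is compactly supported and satisfies ‖f - v‖_{Lᵖ(ℝⁿ)} < δ. -/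
open MeasureTheory Set
open scoped ENNReal NNReal

/-! ### Auxiliary: two-hidden-layer ReLU networks -/

def IsNet (n : ℕ) (f : EuclideanSpace ℝ (Fin n) → ℝ) : Prop :=
  ∃ (h₁ h₂ : ℕ) (W₁ : Fin h₁ → EuclideanSpace ℝ (Fin n)) (b₁ : Fin h₁ → ℝ)
    (W₂ : Fin h₂ → Fin h₁ → ℝ) (b₂ : Fin h₂ → ℝ) (w₃ : Fin h₂ → ℝ),
    f = (fun x => ∑ k, w₃ k *
          max (∑ j, W₂ k j * max (inner ℝ (W₁ j) x + b₁ j : ℝ) 0 + b₂ k) 0)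

variable {n : ℕ}

lemma isNet_zero : IsNet n (fun _ => 0) := by
  refine ⟨0, 0, Fin.elim0, Fin.elim0, Fin.elim0, Fin.elim0, Fin.elim0, ?_⟩
  funext x; simp

lemma isNet_add {f g : EuclideanSpace ℝ (Fin n) → ℝ} (hf : IsNet n f) (hg : IsNet n g) :
    IsNet n (fun x => f x + g x) := by
  obtain ⟨a₁, a₂, W₁, b₁, W₂, b₂, w₃, rfl⟩ := hf
  obtain ⟨c₁, c₂, V₁, d₁, V₂, d₂, v₃, rfl⟩ := hg
  refine ⟨a₁ + c₁, a₂ + c₂, Fin.addCases W₁ V₁, Fin.addCases b₁ d₁,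
    Fin.addCases (fun k => Fin.addCases (W₂ k) 0) (fun k => Fin.addCases 0 (V₂ k)),
    Fin.addCases b₂ d₂, Fin.addCases w₃ v₃, ?_⟩
  funext x
  rw [Fin.sum_univ_add]
  congr 1
  · refine Finset.sum_congr rfl fun k _ => ?_
    simp only [Fin.addCases_left]
    congr 2
    rw [Fin.sum_univ_add]
    simp [Fin.addCases_left, Fin.addCases_right]
  · refine Finset.sum_congr rfl fun k _ => ?_
    simp only [Fin.addCases_right]
    congr 2
    rw [Fin.sum_univ_add]
    simp [Fin.addCases_left, Fin.addCases_right]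

lemma isNet_single {ι : Type} [Fintype ι] (c : ℝ) (w : ι → EuclideanSpace ℝ (Fin n))
    (β : ι → ℝ) (cc : ι → ℝ) (b : ℝ) :
    IsNet n (fun x => c * max (∑ j, cc j * max (inner ℝ (w j) x + β j : ℝ) 0 + b) 0) := by
  classical
  obtain ⟨e⟩ := Fintype.truncEquivFin ι
  refine ⟨Fintype.card ι, 1, w ∘ e.symm, β ∘ e.symm, fun _ j => cc (e.symm j), fun _ => b,
    fun _ => c, ?_⟩
  funext x
  rw [Fin.sum_univ_one]
  congr 2
  congr 1
  exact (Equiv.sum_comp e.symm fun j => cc j * max (inner ℝ (w j) x + β j : ℝ) 0).symm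

lemma isNet_sum {ι : Type} (s : Finset ι) (f : ι → EuclideanSpace ℝ (Fin n) → ℝ)
    (hf : ∀ i ∈ s, IsNet n (f i)) : IsNet n (fun x => ∑ i ∈ s, f i x) := by
  classical
  induction s using Finset.induction_on with
  | empty => simpa using isNet_zero
  | insert a t hx ih =>
    simp only [Finset.sum_insert hx]
    exact isNet_add (hf a (Finset.mem_insert_self a t))
      (ih fun i hi => hf i (Finset.mem_insert_of_mem hi))

/-! ### Auxiliary: trapezoid bumps -/

noncomputable def ramp (a η s : ℝ) : ℝ := max (s - a) 0 - max (s - a - η) 0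

lemma ramp_eq (a η s : ℝ) (hη : 0 ≤ η) : ramp a η s = min (max (s - a) 0) η := by
  unfold ramp
  rcases le_total (s - a) 0 with h | h
  · rw [max_eq_right h, max_eq_right (by linarith), min_eq_left hη]
    ring
  · rw [max_eq_left h]
    rcases le_total (s - a - η) 0 with h2 | h2
    · rw [max_eq_right h2, min_eq_left (by linarith)]; ring
    · rw [max_eq_left h2, min_eq_right (by linarith)]; ring

noncomputable def trap (a b η s : ℝ) : ℝ := (ramp a η s - ramp (b - η) η s) / η

variable {a b η s : ℝ}

lemma trap_nonneg (hη : 0 < η) (hab : η ≤ b - a) : 0 ≤ trap a b η s := by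
  unfold trap
  rw [ramp_eq _ _ _ hη.le, ramp_eq _ _ _ hη.le]
  apply div_nonneg _ hη.le
  have : max (s - (b - η)) 0 ≤ max (s - a) 0 :=
    max_le_max (by linarith) le_rfl
  have := min_le_min this (le_refl η)
  linarith

lemma trap_le_one (hη : 0 < η) : trap a b η s ≤ 1 := by
  unfold trap
  rw [ramp_eq _ _ _ hη.le, ramp_eq _ _ _ hη.le, div_le_one hη]
  have h1 : min (max (s - a) 0) η ≤ η := min_le_right _ _
  have h2 : 0 ≤ min (max (s - (b - η)) 0) η := le_min (le_max_right _ _) hη.le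
  linarith

lemma trap_eq_one (hη : 0 < η) (h1 : a + η ≤ s) (h2 : s ≤ b - η) : trap a b η s = 1 := by
  unfold trap
  rw [ramp_eq _ _ _ hη.le, ramp_eq _ _ _ hη.le]
  rw [max_eq_left (by linarith), min_eq_right (by linarith),
    max_eq_right (by linarith), min_eq_left hη.le, div_eq_one_iff_eq hη.ne']
  ring

lemma trap_eq_zero (hη : 0 < η) (hab : η ≤ b - a) (h : s ≤ a ∨ b ≤ s) : trap a b η s = 0 := by
  unfold trap
  rw [ramp_eq _ _ _ hη.le, ramp_eq _ _ _ hη.le]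
  rcases h with h | h
  · rw [max_eq_right (by linarith), max_eq_right (by linarith)]
    simp [min_eq_left hη.le]
  · rw [max_eq_left (by linarith), max_eq_left (by linarith),
      min_eq_right (by linarith), min_eq_right (by linarith)]
    simp

lemma trap_continuous (a b η : ℝ) : Continuous (trap a b η) := by
  unfold trap ramp
  fun_prop

noncomputable def bump (n : ℕ) (a b : Fin n → ℝ) (η : ℝ)
    (x : EuclideanSpace ℝ (Fin n)) : ℝ :=
  max (∑ i, trap (a i) (b i) η (x i) - (n - 1)) 0

variable {A B : Fin n → ℝ} {x : EuclideanSpace ℝ (Fin n)}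

lemma bump_nonneg : 0 ≤ bump n A B η x := le_max_right _ _

lemma bump_le_one (hη : 0 < η) : bump n A B η x ≤ 1 := by
  unfold bump
  apply max_le _ zero_le_one
  have : ∑ i, trap (A i) (B i) η (x i) ≤ ∑ _i : Fin n, (1 : ℝ) :=
    Finset.sum_le_sum fun i _ => trap_le_one hη
  simp only [Finset.sum_const, Finset.card_univ, Fintype.card_fin, nsmul_eq_mul, mul_one] at this
  linarith

lemma bump_eq_one (hη : 0 < η) (h : ∀ i, A i + η ≤ x i ∧ x i ≤ B i - η) :
    bump n A B η x = 1 := by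
  unfold bump
  have : ∑ i, trap (A i) (B i) η (x i) = ∑ _i : Fin n, (1 : ℝ) :=
    Finset.sum_congr rfl fun i _ => trap_eq_one hη (h i).1 (h i).2
  rw [this]
  simp only [Finset.sum_const, Finset.card_univ, Fintype.card_fin, nsmul_eq_mul, mul_one]
  rw [max_eq_left] <;> linarith

lemma bump_eq_zero (hη : 0 < η) (hab : ∀ i, η ≤ B i - A i)
    (h : ∃ i, x i < A i ∨ B i < x i) : bump n A B η x = 0 := by
  unfold bump
  obtain ⟨i, hi⟩ := h
  have hzero : trap (A i) (B i) η (x i) = 0 :=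
    trap_eq_zero hη (hab i) (by rcases hi with h | h; exacts [Or.inl h.le, Or.inr h.le])
  have hsum : ∑ j, trap (A j) (B j) η (x j) ≤ (n : ℝ) - 1 := by
    classical
    rw [← Finset.sum_erase_add _ _ (Finset.mem_univ i), hzero, add_zero]
    have h1 : ∑ j ∈ Finset.univ.erase i, trap (A j) (B j) η (x j) ≤
        ∑ _j ∈ Finset.univ.erase i, (1 : ℝ) :=
      Finset.sum_le_sum fun j _ => trap_le_one hη
    have h2 : (Finset.univ.erase i).card = n - 1 := by
      rw [Finset.card_erase_of_mem (Finset.mem_univ i)]; simp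
    rw [Finset.sum_const, h2, nsmul_eq_mul, mul_one] at h1
    have hn : 1 ≤ n := Fin.pos i
    have : ((n - 1 : ℕ) : ℝ) = (n : ℝ) - 1 := by
      rw [Nat.cast_sub hn]; simp
    linarith
  rw [max_eq_right]; linarith

lemma bump_continuous (a b : Fin n → ℝ) (η : ℝ) : Continuous (bump n a b η) := by
  unfold bump
  apply Continuous.max _ continuous_const
  apply Continuous.sub _ continuous_const
  apply continuous_finset_sum
  intro i _
  exact (trap_continuous _ _ _).comp (EuclideanSpace.proj i).continuous

lemma isNet_bump (c : ℝ) (A B : Fin n → ℝ) {η : ℝ} (hη : η ≠ 0) :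
    IsNet n (fun x => c * bump n A B η x) := by
  have h := isNet_single (ι := Fin n × Fin 4) c
    (fun p => EuclideanSpace.single p.1 (1:ℝ))
    (fun p => ![-(A p.1), -(A p.1) - η, -(B p.1 - η), -(B p.1 - η) - η] p.2)
    (fun p => ![1/η, -(1/η), -(1/η), 1/η] p.2)
    (-((n : ℝ) - 1))
  convert h using 2 with x
  unfold bump
  congr 1
  have hsum : ∀ i : Fin n, trap (A i) (B i) η (x i) =
      ∑ y : Fin 4, ![1/η,-(1/η),-(1/η),1/η] y *
        max (inner ℝ (EuclideanSpace.single i (1:ℝ)) x +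
          ![-A i, -A i - η, -(B i - η), -(B i - η) - η] y : ℝ) 0 := by
    intro i
    rw [Fin.sum_univ_four]
    simp only [Matrix.cons_val_zero, Matrix.cons_val_one, Matrix.head_cons,
      Matrix.cons_val_two, Matrix.tail_cons, Matrix.cons_val_three,
      EuclideanSpace.inner_single_left, map_one, one_mul]
    unfold trap ramp
    have e1 : x i + -A i = x i - A i := by ring
    have e2 : x i + (-A i - η) = x i - A i - η := by ring
    have e3 : x i + -(B i - η) = x i - (B i - η) := by ring
    have e4 : x i + (-(B i - η) - η) = x i - (B i - η) - η := by ring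
    rw [e1, e2, e3, e4]
    field_simp
    ring
  rw [Fintype.sum_prod_type, sub_eq_add_neg (∑ i, trap (A i) (B i) η (x i)) ((n:ℝ)-1)]
  exact congrArg (fun z => max z 0)
    (congrArg (· + -((n:ℝ)-1)) (Finset.sum_congr rfl fun i _ => hsum i))

/-! ### Auxiliary: boxes and their volumes -/

lemma measurableSet_box' (s : Fin n → Set ℝ) (hs : ∀ i, MeasurableSet (s i)) :
    MeasurableSet (WithLp.ofLp ⁻¹' Set.univ.pi s : Set (EuclideanSpace ℝ (Fin n))) :=
  (WithLp.measurable_ofLp 2 (Fin n → ℝ)) (MeasurableSet.univ_pi hs)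

lemma volume_box (a b : Fin n → ℝ) :
    (volume : Measure (EuclideanSpace ℝ (Fin n)))
      (WithLp.ofLp ⁻¹' Set.univ.pi fun i => Set.Icc (a i) (b i)) = ∏ i, ENNReal.ofReal (b i - a i) := by
  rw [(PiLp.volume_preserving_ofLp (Fin n)).measure_preimage
    (MeasurableSet.univ_pi fun i => measurableSet_Icc).nullMeasurableSet, volume_pi_pi]
  simp [Real.volume_Icc]

/-! ### Per-cell estimates -/

lemma cell_pointwise (A : Fin n → ℝ) {ℓ η : ℝ} (γ : ℝ) (hη : 0 < η) (hηℓ : η ≤ ℓ)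
    (x : EuclideanSpace ℝ (Fin n)) :
    ‖γ * bump n A (fun i => A i + ℓ) η x -
        (WithLp.ofLp ⁻¹' Set.univ.pi fun i => Set.Ico (A i) (A i + ℓ)).indicator (fun _ => γ) x‖ ≤
      ‖(((WithLp.ofLp ⁻¹' Set.univ.pi fun i => Set.Icc (A i) (A i + ℓ)) \
          (WithLp.ofLp ⁻¹' Set.univ.pi fun i => Set.Icc (A i + η) (A i + ℓ - η))).indicator
            (fun _ => γ) x)‖ := by
  by_cases hS : x ∈ (WithLp.ofLp ⁻¹' Set.univ.pi fun i => Set.Icc (A i + η) (A i + ℓ - η) :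
      Set (EuclideanSpace ℝ (Fin n)))
  · have hb : bump n A (fun i => A i + ℓ) η x = 1 := by
      apply bump_eq_one hη
      intro i
      have := hS i (mem_univ i)
      exact ⟨this.1, by simpa using this.2⟩
    have hQ : x ∈ (WithLp.ofLp ⁻¹' Set.univ.pi fun i => Set.Ico (A i) (A i + ℓ) :
        Set (EuclideanSpace ℝ (Fin n))) := by
      intro i _
      have := hS i (mem_univ i)
      constructor <;> [linarith [this.1]; linarith [this.2]]
    rw [Set.indicator_of_mem hQ, hb, Set.indicator_of_notMem (fun hc => hc.2 hS)]
    simp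
  · by_cases hK : x ∈ (WithLp.ofLp ⁻¹' Set.univ.pi fun i => Set.Icc (A i) (A i + ℓ) :
        Set (EuclideanSpace ℝ (Fin n)))
    · rw [Set.indicator_of_mem (show x ∈ ((WithLp.ofLp ⁻¹' Set.univ.pi fun i => Set.Icc (A i) (A i + ℓ)) \
        (WithLp.ofLp ⁻¹' Set.univ.pi fun i => Set.Icc (A i + η) (A i + ℓ - η)) :
          Set (EuclideanSpace ℝ (Fin n))) from ⟨hK, hS⟩)]
      have h0 : 0 ≤ bump n A (fun i => A i + ℓ) η x := bump_nonneg
      have h1 : bump n A (fun i => A i + ℓ) η x ≤ 1 := bump_le_one hη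
      by_cases hQ : x ∈ (WithLp.ofLp ⁻¹' Set.univ.pi fun i => Set.Ico (A i) (A i + ℓ) :
          Set (EuclideanSpace ℝ (Fin n)))
      · rw [Set.indicator_of_mem hQ, Real.norm_eq_abs, Real.norm_eq_abs]
        have he : γ * bump n A (fun i => A i + ℓ) η x - γ
            = γ * (bump n A (fun i => A i + ℓ) η x - 1) := by ring
        rw [he, abs_mul]
        have habs : |bump n A (fun i => A i + ℓ) η x - 1| ≤ 1 :=
          abs_le.mpr ⟨by linarith, by linarith⟩
        nlinarith [abs_nonneg γ]
      · rw [Set.indicator_of_notMem hQ, sub_zero, Real.norm_eq_abs, Real.norm_eq_abs, abs_mul]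
        have habs : |bump n A (fun i => A i + ℓ) η x| ≤ 1 :=
          abs_le.mpr ⟨by linarith, by linarith⟩
        nlinarith [abs_nonneg γ]
    · have hb : bump n A (fun i => A i + ℓ) η x = 0 := by
        apply bump_eq_zero hη (fun i => by simp [hηℓ])
        rw [Set.mem_preimage, Set.mem_univ_pi] at hK
        push_neg at hK
        obtain ⟨i, hi⟩ := hK
        rw [Set.mem_Icc] at hi
        push_neg at hi
        rcases lt_or_ge (x i) (A i) with h | h
        · exact ⟨i, Or.inl h⟩
        · exact ⟨i, Or.inr (hi h)⟩
      have hQ : x ∉ (WithLp.ofLp ⁻¹' Set.univ.pi fun i => Set.Ico (A i) (A i + ℓ) :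
          Set (EuclideanSpace ℝ (Fin n))) := by
        intro hc
        exact hK (fun i hi => Set.Ico_subset_Icc_self (hc i hi))
      rw [Set.indicator_of_notMem hQ, hb]
      simp [norm_nonneg]

lemma cell_voldiff {ℓ η : ℝ} (A : Fin n → ℝ) (hη : 0 ≤ η) (h2η : 2 * η ≤ ℓ) :
    (volume : Measure (EuclideanSpace ℝ (Fin n)))
      ((WithLp.ofLp ⁻¹' Set.univ.pi fun i => Set.Icc (A i) (A i + ℓ)) \
        (WithLp.ofLp ⁻¹' Set.univ.pi fun i => Set.Icc (A i + η) (A i + ℓ - η)))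
      = ENNReal.ofReal (ℓ ^ n - (ℓ - 2 * η) ^ n) := by
  have hℓ : (0:ℝ) ≤ ℓ := by linarith
  have hsub : (WithLp.ofLp ⁻¹' Set.univ.pi fun i => Set.Icc (A i + η) (A i + ℓ - η) :
      Set (EuclideanSpace ℝ (Fin n))) ⊆
      WithLp.ofLp ⁻¹' Set.univ.pi fun i => Set.Icc (A i) (A i + ℓ) := by
    intro x hx i hi
    have := hx i hi
    exact ⟨by linarith [this.1], by linarith [this.2]⟩
  have hfin : (volume : Measure (EuclideanSpace ℝ (Fin n)))
      (WithLp.ofLp ⁻¹' Set.univ.pi fun i => Set.Icc (A i + η) (A i + ℓ - η)) ≠ ⊤ := by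
    rw [volume_box]
    exact (ENNReal.prod_lt_top fun i _ => ENNReal.ofReal_lt_top).ne
  have hd := measure_diff (μ := (volume : Measure (EuclideanSpace ℝ (Fin n)))) hsub
    (measurableSet_box' _ fun i => measurableSet_Icc).nullMeasurableSet hfin
  rw [hd]
  have h1 : (volume : Measure (EuclideanSpace ℝ (Fin n)))
      (WithLp.ofLp ⁻¹' Set.univ.pi fun i => Set.Icc (A i) (A i + ℓ)) = ENNReal.ofReal (ℓ ^ n) := by
    rw [volume_box]
    simp only [add_sub_cancel_left]
    rw [Finset.prod_const, Finset.card_univ, Fintype.card_fin, ← ENNReal.ofReal_pow hℓ]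
  have h2 : (volume : Measure (EuclideanSpace ℝ (Fin n)))
      (WithLp.ofLp ⁻¹' Set.univ.pi fun i => Set.Icc (A i + η) (A i + ℓ - η))
      = ENNReal.ofReal ((ℓ - 2 * η) ^ n) := by
    rw [volume_box]
    have he : ∀ i : Fin n, A i + ℓ - η - (A i + η) = ℓ - 2 * η := fun i => by ring
    simp only [he]
    rw [Finset.prod_const, Finset.card_univ, Fintype.card_fin,
      ← ENNReal.ofReal_pow (by linarith)]
  rw [h1, h2, ← ENNReal.ofReal_sub _ (pow_nonneg (by linarith) n)]



lemma coord_le_norm (x : EuclideanSpace ℝ (Fin n)) (i : Fin n) : |x i| ≤ ‖x‖ := by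
  rw [EuclideanSpace.norm_eq, ← Real.sqrt_sq (abs_nonneg (x i))]
  apply Real.sqrt_le_sqrt
  have := Finset.single_le_sum (f := fun j => ‖x j‖ ^ 2)
    (fun j _ => sq_nonneg _) (Finset.mem_univ i)
  simpa [Real.norm_eq_abs, sq_abs] using this

lemma norm_le_of_coords {x : EuclideanSpace ℝ (Fin n)} {r : ℝ} (hr : 0 ≤ r)
    (h : ∀ i, |x i| ≤ r) : ‖x‖ ≤ Real.sqrt n * r := by
  rw [EuclideanSpace.norm_eq]
  have hb : ∑ i, ‖x i‖ ^ 2 ≤ (n : ℝ) * r ^ 2 := by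
    calc ∑ i, ‖x i‖ ^ 2 ≤ ∑ _i : Fin n, r ^ 2 := by
          apply Finset.sum_le_sum
          intro i _
          rw [Real.norm_eq_abs]
          nlinarith [h i, abs_nonneg (x i)]
      _ = (n : ℝ) * r ^ 2 := by simp [Finset.sum_const, Finset.card_univ, mul_comm]
  calc Real.sqrt (∑ i, ‖x i‖ ^ 2) ≤ Real.sqrt ((n : ℝ) * r ^ 2) := Real.sqrt_le_sqrt hb
    _ = Real.sqrt n * r := by
        rw [Real.sqrt_mul (Nat.cast_nonneg n), Real.sqrt_sq hr]

lemma dist_le_of_coords {x y : EuclideanSpace ℝ (Fin n)} {r : ℝ} (hr : 0 ≤ r)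
    (h : ∀ i, |x i - y i| ≤ r) : dist x y ≤ Real.sqrt n * r := by
  rw [EuclideanSpace.dist_eq]
  have hb : ∑ i, dist (x i) (y i) ^ 2 ≤ (n : ℝ) * r ^ 2 := by
    calc ∑ i, dist (x i) (y i) ^ 2 ≤ ∑ _i : Fin n, r ^ 2 := by
          apply Finset.sum_le_sum
          intro i _
          rw [Real.dist_eq]
          nlinarith [h i, abs_nonneg (x i - y i)]
      _ = (n : ℝ) * r ^ 2 := by simp [Finset.sum_const, Finset.card_univ, mul_comm]
  calc Real.sqrt (∑ i, dist (x i) (y i) ^ 2) ≤ Real.sqrt ((n : ℝ) * r ^ 2) :=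
        Real.sqrt_le_sqrt hb
    _ = Real.sqrt n * r := by
        rw [Real.sqrt_mul (Nat.cast_nonneg n), Real.sqrt_sq hr]

set_option maxHeartbeats 1000000 in
lemma net_approx_cont (n : ℕ) (q : ℝ≥0∞) (hq1 : 1 ≤ q) (hqt : q ≠ ⊤)
    (g : EuclideanSpace ℝ (Fin n) → ℝ) (hgc : Continuous g) (hgs : HasCompactSupport g)
    {ε : ℝ≥0∞} (hε : 0 < ε) :
    ∃ f, IsNet n f ∧ Continuous f ∧ HasCompactSupport f ∧
      eLpNorm (fun x => f x - g x) q volume < ε := by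
  classical
  have hq0 : q ≠ 0 := (lt_of_lt_of_le zero_lt_one hq1).ne'
  set qr := q.toReal with hqr_def
  have hqr_pos : 0 < qr := ENNReal.toReal_pos hq0 hqt
  have hhalf : ε / 2 ≠ 0 := (ENNReal.half_pos hε.ne').ne'
  -- bound on g
  obtain ⟨G₀, hG₀⟩ := hgs.exists_bound_of_continuous hgc
  set G : ℝ := |G₀| + 1 with hG_def
  have hGpos : 0 < G := by positivity
  have hGbd : ∀ x, |g x| ≤ G := fun x => by
    have := hG₀ x
    rw [Real.norm_eq_abs] at this
    have h2 := le_abs_self G₀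
    linarith
  -- support radius
  obtain ⟨R, hR0, hRsub⟩ := hgs.isBounded.subset_closedBall_lt 0 0
  set R₀ : ℝ := R + 1 with hR₀_def
  have hR₀ : 0 < R₀ := by linarith
  -- uniform continuity
  have hgu : UniformContinuous g :=
    hgc.uniformContinuous_of_tendsto_cocompact hgs.is_zero_at_infty
  -- the big closed box and its volume
  set bigK : Set (EuclideanSpace ℝ (Fin n)) :=
    WithLp.ofLp ⁻¹' Set.univ.pi fun _ : Fin n => Set.Icc (-R₀) R₀ with hbigK_def
  have hbigK_vol : volume bigK = ENNReal.ofReal (2 * R₀) ^ n := by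
    rw [hbigK_def]
    have := volume_box (n := n) (fun _ => -R₀) (fun _ => R₀)
    simp only [this]
    rw [Finset.prod_const, Finset.card_univ, Fintype.card_fin]
    congr 1
    ring
  set C₂ : ℝ≥0∞ := (volume bigK) ^ (1 / qr) with hC₂_def
  have hC₂ : C₂ ≠ ⊤ := by
    apply ENNReal.rpow_ne_top_of_nonneg (by positivity)
    rw [hbigK_vol]
    exact (ENNReal.pow_ne_top ENNReal.ofReal_ne_top)
  -- choose ε' for the piecewise-constant approximation
  obtain ⟨t₂, ht₂pos, ht₂⟩ := ENNReal.exists_nnreal_pos_mul_lt hC₂ hhalf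
  set ε' : ℝ := (t₂ : ℝ) with hε'_def
  have hε'pos : 0 < ε' := ht₂pos
  -- modulus of uniform continuity
  obtain ⟨δ₀, hδ₀pos, hδ₀⟩ := Metric.uniformContinuous_iff.mp hgu ε' hε'pos
  -- choose the number of grid cells
  obtain ⟨N, hN⟩ := exists_nat_gt (max 1 (Real.sqrt n * (2 * R₀) / δ₀))
  have hN1 : (1 : ℝ) < N := lt_of_le_of_lt (le_max_left _ _) hN
  have hNpos : 0 < N := by exact_mod_cast lt_trans zero_lt_one hN1
  set ℓ : ℝ := 2 * R₀ / N with hℓ_def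
  have hℓpos : 0 < ℓ := by
    apply div_pos (by linarith) (by exact_mod_cast hNpos)
  have hℓδ : Real.sqrt n * ℓ < δ₀ := by
    have h1 : Real.sqrt n * (2 * R₀) / δ₀ < N := lt_of_le_of_lt (le_max_right _ _) hN
    rw [div_lt_iff₀ hδ₀pos] at h1
    rw [hℓ_def, mul_div_assoc']
    rw [div_lt_iff₀ (by exact_mod_cast hNpos)]
    linarith
  have hNℓ : (N : ℝ) * ℓ = 2 * R₀ := by
    rw [hℓ_def]
    field_simp
  -- the grid
  set lo : (Fin n → Fin N) → Fin n → ℝ := fun m i => -R₀ + (m i : ℕ) * ℓ with hlo_def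
  set Q : (Fin n → Fin N) → Set (EuclideanSpace ℝ (Fin n)) :=
    fun m => WithLp.ofLp ⁻¹' Set.univ.pi fun i => Set.Ico (lo m i) (lo m i + ℓ) with hQ_def
  set γ : (Fin n → Fin N) → ℝ := fun m => g ((WithLp.equiv 2 (Fin n → ℝ)).symm (lo m)) with hγ_def
  -- choose τ and η for the cell-rounding error
  set C₁ : ℝ≥0∞ := (Fintype.card (Fin n → Fin N) : ℝ≥0∞) * ENNReal.ofReal G with hC₁_def
  have hC₁ : C₁ ≠ ⊤ := by
    rw [hC₁_def]
    exact ENNReal.mul_ne_top (ENNReal.natCast_ne_top _) ENNReal.ofReal_ne_top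
  obtain ⟨t₁, ht₁pos, ht₁⟩ := ENNReal.exists_nnreal_pos_mul_lt hC₁ hhalf
  set τ : ℝ := (t₁ : ℝ) ^ qr with hτ_def
  have hτpos : 0 < τ := Real.rpow_pos_of_pos ht₁pos qr
  have hcont : ContinuousAt (fun η : ℝ => ℓ ^ n - (ℓ - 2 * η) ^ n) 0 := by fun_prop
  have hev : ∀ᶠ η in nhds (0:ℝ), ℓ ^ n - (ℓ - 2 * η) ^ n < τ := by
    apply hcont.eventually_lt_const
    simp [hτpos]
  obtain ⟨d, hd0, hball⟩ := Metric.eventually_nhds_iff.mp hev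
  set η : ℝ := min (d / 2) (ℓ / 2) with hη_def
  have hηpos : 0 < η := lt_min (by linarith) (by linarith)
  have h2η : 2 * η ≤ ℓ := by
    have := min_le_right (d / 2) (ℓ / 2)
    rw [hη_def]
    linarith [min_le_right (d / 2) (ℓ / 2)]
  have hηℓ : η ≤ ℓ := by linarith
  have hηd : ℓ ^ n - (ℓ - 2 * η) ^ n < τ := by
    apply hball
    rw [Real.dist_eq, sub_zero, abs_of_pos hηpos]
    have := min_le_left (d / 2) (ℓ / 2)
    rw [hη_def]
    linarith [min_le_left (d / 2) (ℓ / 2)]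
  -- basic grid facts
  have hlo_lb : ∀ (m : Fin n → Fin N) i, -R₀ ≤ lo m i := by
    intro m i
    simp only [hlo_def]
    have : (0:ℝ) ≤ (m i : ℕ) * ℓ := by positivity
    linarith
  have hlo_ub : ∀ (m : Fin n → Fin N) i, lo m i + ℓ ≤ R₀ := by
    intro m i
    simp only [hlo_def]
    have hmi : ((m i : ℕ) : ℝ) + 1 ≤ N := by
      exact_mod_cast Nat.succ_le_of_lt (m i).isLt
    have : ((m i : ℕ) : ℝ) * ℓ + ℓ ≤ (N : ℝ) * ℓ := by nlinarith
    linarith [hNℓ]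
  -- the network
  set F : (Fin n → Fin N) → EuclideanSpace ℝ (Fin n) → ℝ :=
    fun m x => γ m * bump n (lo m) (fun i => lo m i + ℓ) η x with hF_def
  set f : EuclideanSpace ℝ (Fin n) → ℝ := fun x => ∑ m : Fin n → Fin N, F m x with hf_def
  have hfnet : IsNet n f := by
    rw [hf_def]
    exact isNet_sum Finset.univ F (fun m _ => by
      rw [hF_def]
      exact isNet_bump _ _ _ hηpos.ne')
  have hbump_zero : ∀ (m : Fin n → Fin N) (x : EuclideanSpace ℝ (Fin n)) (i : Fin n),
      (x i < -R₀ ∨ R₀ < x i) → bump n (lo m) (fun i => lo m i + ℓ) η x = 0 := by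
    intro m x i hi
    apply bump_eq_zero hηpos (fun j => by simpa using hηℓ)
    refine ⟨i, ?_⟩
    rcases hi with h | h
    · exact Or.inl (lt_of_lt_of_le h (hlo_lb m i))
    · exact Or.inr (lt_of_le_of_lt (hlo_ub m i) h)
  have hfsupp : HasCompactSupport f := by
    apply HasCompactSupport.intro (isCompact_closedBall (0 : EuclideanSpace ℝ (Fin n))
      (Real.sqrt n * R₀))
    intro x hx
    have hcoord : ∃ i, x i < -R₀ ∨ R₀ < x i := by
      by_contra hc
      push_neg at hc
      apply hx
      rw [Metric.mem_closedBall, dist_zero_right]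
      apply norm_le_of_coords hR₀.le
      intro i
      rw [abs_le]
      exact ⟨(hc i).1, (hc i).2⟩
    obtain ⟨i, hi⟩ := hcoord
    rw [hf_def]
    apply Finset.sum_eq_zero
    intro m _
    rw [hF_def]
    simp only []
    rw [hbump_zero m x i hi, mul_zero]
  -- the piecewise-constant function
  set s : EuclideanSpace ℝ (Fin n) → ℝ :=
    fun x => ∑ m : Fin n → Fin N, (Q m).indicator (fun _ => γ m) x with hs_def
  have hQmeas : ∀ m, MeasurableSet (Q m) := by
    intro m
    rw [hQ_def]
    exact measurableSet_box' _ fun i => measurableSet_Ico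
  have hsmeas : Measurable s := by
    rw [hs_def]
    exact Finset.measurable_sum _ fun m _ => measurable_const.indicator (hQmeas m)
  have hFcont : ∀ m, Continuous (F m) := by
    intro m
    rw [hF_def]
    exact continuous_const.mul (bump_continuous _ _ _)
  -- the big half-open box
  set bigHO : Set (EuclideanSpace ℝ (Fin n)) :=
    WithLp.ofLp ⁻¹' Set.univ.pi fun _ : Fin n => Set.Ico (-R₀) R₀ with hbigHO_def
  have hQsub : ∀ m, Q m ⊆ bigHO := by
    intro m y hy i _
    have h := hy i (mem_univ i)
    exact ⟨le_trans (hlo_lb m i) h.1, lt_of_lt_of_le h.2 (hlo_ub m i)⟩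
  -- each point of the big half-open box lies in exactly one cell
  have hcell_unique : ∀ x : EuclideanSpace ℝ (Fin n), x ∈ bigHO →
      ∃ m₀ : Fin n → Fin N, x ∈ Q m₀ ∧ ∀ m, x ∈ Q m → m = m₀ := by
    intro x hx
    have hx' : ∀ i, -R₀ ≤ x i ∧ x i < R₀ := fun i => hx i (mem_univ i)
    have hu0 : ∀ i, 0 ≤ (x i + R₀) / ℓ := fun i =>
      div_nonneg (by linarith [(hx' i).1]) hℓpos.le
    have huN : ∀ i, (x i + R₀) / ℓ < N := by
      intro i
      rw [div_lt_iff₀ hℓpos]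
      have := (hx' i).2
      nlinarith [hNℓ]
    have hfloorlt : ∀ i, ⌊(x i + R₀) / ℓ⌋₊ < N := fun i =>
      (Nat.floor_lt (hu0 i)).mpr (huN i)
    set m₀ : Fin n → Fin N := fun i => ⟨⌊(x i + R₀) / ℓ⌋₊, hfloorlt i⟩ with hm₀_def
    have hxQ : x ∈ Q m₀ := by
      rw [hQ_def]
      intro i _
      have hle : (⌊(x i + R₀) / ℓ⌋₊ : ℝ) ≤ (x i + R₀) / ℓ := Nat.floor_le (hu0 i)
      have hlt : (x i + R₀) / ℓ < ⌊(x i + R₀) / ℓ⌋₊ + 1 := Nat.lt_floor_add_one _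
      have hxid : (x i + R₀) / ℓ * ℓ = x i + R₀ := div_mul_cancel₀ _ hℓpos.ne'
      have hle' : (⌊(x i + R₀) / ℓ⌋₊ : ℝ) * ℓ ≤ x i + R₀ := by
        calc (⌊(x i + R₀) / ℓ⌋₊ : ℝ) * ℓ ≤ (x i + R₀) / ℓ * ℓ :=
              mul_le_mul_of_nonneg_right hle hℓpos.le
          _ = x i + R₀ := hxid
      have hlt' : x i + R₀ < (⌊(x i + R₀) / ℓ⌋₊ : ℝ) * ℓ + ℓ := by
        calc x i + R₀ = (x i + R₀) / ℓ * ℓ := hxid.symm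
          _ < ((⌊(x i + R₀) / ℓ⌋₊ : ℝ) + 1) * ℓ := by
              exact mul_lt_mul_of_pos_right hlt hℓpos
          _ = (⌊(x i + R₀) / ℓ⌋₊ : ℝ) * ℓ + ℓ := by ring
      have hmval : ((m₀ i : Fin N) : ℕ) = ⌊(x i + R₀) / ℓ⌋₊ := by rw [hm₀_def]
      constructor
      · simp only [hlo_def, hmval]
        push_cast
        linarith
      · simp only [hlo_def, hmval]
        push_cast
        linarith
    refine ⟨m₀, hxQ, ?_⟩
    intro m hm
    funext i
    apply Fin.ext
    have h := hm i (mem_univ i)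
    simp only [hlo_def] at h
    have h1 : ((m i : ℕ) : ℝ) ≤ (x i + R₀) / ℓ := by
      rw [le_div_iff₀ hℓpos]
      linarith [h.1]
    have h2 : (x i + R₀) / ℓ < (m i : ℕ) + 1 := by
      rw [div_lt_iff₀ hℓpos]
      have hexp : (((m i : ℕ) : ℝ) + 1) * ℓ = ((m i : ℕ) : ℝ) * ℓ + ℓ := by ring
      rw [hexp]
      linarith [h.2]
    have hfl : ⌊(x i + R₀) / ℓ⌋₊ = (m i : ℕ) :=
      (Nat.floor_eq_iff (hu0 i)).mpr ⟨h1, h2⟩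
    rw [hm₀_def]
    exact hfl.symm
  -- pointwise bound for the piecewise-constant approximation
  have hpt2 : ∀ x, ‖s x - g x‖ ≤ ‖bigK.indicator (fun _ => ε') x‖ := by
    intro x
    by_cases hx : x ∈ bigHO
    · obtain ⟨m₀, hm₀, huniq⟩ := hcell_unique x hx
      have hsx : s x = γ m₀ := by
        simp only [hs_def]
        rw [Finset.sum_eq_single m₀]
        · exact Set.indicator_of_mem hm₀ _
        · intro m _ hne
          exact Set.indicator_of_notMem (fun hmem => hne (huniq m hmem)) _
        · intro h
          exact absurd (Finset.mem_univ m₀) h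
      have hdist : dist ((WithLp.equiv 2 (Fin n → ℝ)).symm (lo m₀)) x < δ₀ := by
        apply lt_of_le_of_lt _ hℓδ
        apply dist_le_of_coords hℓpos.le
        intro i
        have h := hm₀ i (mem_univ i)
        rw [WithLp.equiv_symm_apply, WithLp.ofLp_toLp, abs_le]
        constructor
        · linarith [h.2]
        · linarith [h.1]
      have hval : |γ m₀ - g x| ≤ ε' := by
        have h := hδ₀ hdist
        rw [Real.dist_eq] at h
        exact h.le
      have hxK : x ∈ bigK := fun i hi => Set.Ico_subset_Icc_self (hx i hi)
      rw [hsx, Set.indicator_of_mem hxK, Real.norm_eq_abs, Real.norm_eq_abs,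
        abs_of_pos hε'pos]
      exact hval
    · have hsx : s x = 0 := by
        rw [hs_def]
        exact Finset.sum_eq_zero fun m _ =>
          Set.indicator_of_notMem (fun hmem => hx (hQsub m hmem)) _
      have hgx : g x = 0 := by
        apply image_eq_zero_of_notMem_tsupport
        intro hmem
        apply hx
        have hball := hRsub hmem
        rw [Metric.mem_closedBall, dist_zero_right] at hball
        intro i _
        have := (coord_le_norm x i).trans hball
        rw [abs_le] at this
        exact ⟨by linarith [this.1], by linarith [this.2]⟩
      rw [hsx, hgx, sub_zero, norm_zero]
      exact norm_nonneg _
  -- Lp bound for the piecewise-constant approximation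
  have hbigK_meas : MeasurableSet bigK := by
    rw [hbigK_def]
    exact measurableSet_box' _ fun i => measurableSet_Icc
  have hpart2 : eLpNorm (fun x => s x - g x) q volume < ε / 2 := by
    calc eLpNorm (fun x => s x - g x) q volume
        ≤ eLpNorm (bigK.indicator (fun _ => ε')) q volume := eLpNorm_mono hpt2
      _ = ‖ε'‖ₑ * (volume bigK) ^ (1 / qr) :=
          eLpNorm_indicator_const hbigK_meas hq0 hqt
      _ = ↑t₂ * C₂ := by
          rw [Real.enorm_eq_ofReal hε'pos.le, hε'_def, ENNReal.ofReal_coe_nnreal, hC₂_def]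
      _ < ε / 2 := ht₂
  -- Lp bound for each cell-rounding error
  have hγbd : ∀ m, |γ m| ≤ G := fun m => hGbd _
  have hcellnorm : ∀ m : Fin n → Fin N,
      eLpNorm (fun x => F m x - (Q m).indicator (fun _ => γ m) x) q volume ≤
        ENNReal.ofReal G * ↑t₁ := by
    intro m
    have hmono : eLpNorm (fun x => F m x - (Q m).indicator (fun _ => γ m) x) q volume ≤
        eLpNorm ((((WithLp.ofLp ⁻¹' Set.univ.pi fun i => Set.Icc (lo m i) (lo m i + ℓ)) \ (WithLp.ofLp ⁻¹' Set.univ.pi fun i => Set.Icc (lo m i + η) (lo m i + ℓ - η)) :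
            Set (EuclideanSpace ℝ (Fin n)))).indicator
            (fun _ => γ m)) q (volume : Measure (EuclideanSpace ℝ (Fin n))) := by
      apply eLpNorm_mono
      intro x
      simp only [hF_def, hQ_def]
      exact cell_pointwise (lo m) (γ m) hηpos hηℓ x
    have hdiffmeas : MeasurableSet (((WithLp.ofLp ⁻¹' Set.univ.pi fun i => Set.Icc (lo m i) (lo m i + ℓ)) \ (WithLp.ofLp ⁻¹' Set.univ.pi fun i => Set.Icc (lo m i + η) (lo m i + ℓ - η)) :
        Set (EuclideanSpace ℝ (Fin n)))) :=
      (measurableSet_box' _ fun i => measurableSet_Icc).diff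
        (measurableSet_box' _ fun i => measurableSet_Icc)
    have hvol : (volume : Measure (EuclideanSpace ℝ (Fin n)))
        ((WithLp.ofLp ⁻¹' Set.univ.pi fun i => Set.Icc (lo m i) (lo m i + ℓ)) \ (WithLp.ofLp ⁻¹' Set.univ.pi fun i => Set.Icc (lo m i + η) (lo m i + ℓ - η)))
        ≤ ENNReal.ofReal τ := by
      rw [cell_voldiff (lo m) hηpos.le h2η]
      exact ENNReal.ofReal_le_ofReal hηd.le
    have hrpow : ((volume : Measure (EuclideanSpace ℝ (Fin n)))
        ((WithLp.ofLp ⁻¹' Set.univ.pi fun i => Set.Icc (lo m i) (lo m i + ℓ)) \ (WithLp.ofLp ⁻¹' Set.univ.pi fun i => Set.Icc (lo m i + η) (lo m i + ℓ - η)))) ^ (1 / qr)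
        ≤ ↑t₁ := by
      calc _ ≤ (ENNReal.ofReal τ) ^ (1 / qr) :=
            ENNReal.rpow_le_rpow hvol (by positivity)
        _ = ENNReal.ofReal (τ ^ (1 / qr)) := ENNReal.ofReal_rpow_of_pos hτpos
        _ = ↑t₁ := by
            rw [hτ_def, ← Real.rpow_mul (NNReal.coe_nonneg t₁), mul_one_div,
              div_self hqr_pos.ne', Real.rpow_one, ENNReal.ofReal_coe_nnreal]
    calc eLpNorm (fun x => F m x - (Q m).indicator (fun _ => γ m) x) q volume
        ≤ _ := hmono
      _ = ‖γ m‖ₑ * (volume _) ^ (1 / qr) := eLpNorm_indicator_const hdiffmeas hq0 hqt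
      _ ≤ ENNReal.ofReal G * ↑t₁ := by
          apply mul_le_mul'
          · rw [Real.enorm_eq_ofReal_abs]
            exact ENNReal.ofReal_le_ofReal (hγbd m)
          · exact hrpow
  -- total bound for part 1
  have hFm_aesm : ∀ m : Fin n → Fin N, AEStronglyMeasurable
      (fun x => F m x - (Q m).indicator (fun _ => γ m) x)
      (volume : Measure (EuclideanSpace ℝ (Fin n))) := fun m =>
    ((hFcont m).aestronglyMeasurable).sub
      ((measurable_const.indicator (hQmeas m)).aestronglyMeasurable)
  have hsplit : (fun x => f x - s x) =
      ∑ m : Fin n → Fin N, (fun x => F m x - (Q m).indicator (fun _ => γ m) x) := by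
    funext x
    simp only [hf_def, hs_def, Finset.sum_apply]
    rw [Finset.sum_sub_distrib]
  have hpart1 : eLpNorm (fun x => f x - s x) q volume < ε / 2 := by
    rw [hsplit]
    calc eLpNorm (∑ m : Fin n → Fin N, fun x => F m x - (Q m).indicator (fun _ => γ m) x)
          q volume
        ≤ ∑ m : Fin n → Fin N,
            eLpNorm (fun x => F m x - (Q m).indicator (fun _ => γ m) x) q volume :=
          eLpNorm_sum_le (fun m _ => hFm_aesm m) hq1
      _ ≤ ∑ _m : Fin n → Fin N, ENNReal.ofReal G * ↑t₁ :=
          Finset.sum_le_sum fun m _ => hcellnorm m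
      _ = (Fintype.card (Fin n → Fin N)) • (ENNReal.ofReal G * ↑t₁) := by
          rw [Finset.sum_const, Finset.card_univ]
      _ = ↑t₁ * C₁ := by
          rw [nsmul_eq_mul, hC₁_def]
          ring
      _ < ε / 2 := ht₁
  have hfcont : Continuous f := by
    rw [hf_def]
    exact continuous_finset_sum _ fun m _ => hFcont m
  have hs_aesm : AEStronglyMeasurable s (volume : Measure (EuclideanSpace ℝ (Fin n))) :=
    hsmeas.aestronglyMeasurable
  have htri : eLpNorm (fun x => f x - g x) q volume ≤
      eLpNorm (fun x => f x - s x) q volume + eLpNorm (fun x => s x - g x) q volume := by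
    have hdecomp : (fun x => f x - g x) = (fun x => f x - s x) + (fun x => s x - g x) := by
      funext x
      simp
    rw [hdecomp]
    exact eLpNorm_add_le (hfcont.aestronglyMeasurable.sub hs_aesm)
      (hs_aesm.sub hgc.aestronglyMeasurable) hq1
  refine ⟨f, hfnet, hfcont, hfsupp, lt_of_le_of_lt htri ?_⟩
  calc eLpNorm (fun x => f x - s x) q volume + eLpNorm (fun x => s x - g x) q volume
      < ε / 2 + ε / 2 := ENNReal.add_lt_add hpart1 hpart2
    _ = ε := ENNReal.add_halves ε

/-- Two-hidden-layer ReLU networks are dense in Lᵖ(ℝⁿ) (1 ≤ p < ∞): for every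
v ∈ Lᵖ(ℝⁿ) and δ > 0 there is a compactly supported two-hidden-layer ReLU network
f(x) = w₃ σ(W₂ σ(W₁ x + b₁) + b₂) with ‖f - v‖_{Lᵖ} < δ. -/
theorem two_hidden_layer_dense_Lp
    (n : ℕ) (p : ℝ) (hp : 1 ≤ p)
    (v : EuclideanSpace ℝ (Fin n) → ℝ)
    (hv : MemLp v (ENNReal.ofReal p) (volume : Measure (EuclideanSpace ℝ (Fin n))))
    (δ : ℝ) (hδ : 0 < δ) :
    ∃ (h₁ h₂ : ℕ) (W₁ : Fin h₁ → EuclideanSpace ℝ (Fin n)) (b₁ : Fin h₁ → ℝ)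
      (W₂ : Fin h₂ → Fin h₁ → ℝ) (b₂ : Fin h₂ → ℝ) (w₃ : Fin h₂ → ℝ)
      (f : EuclideanSpace ℝ (Fin n) → ℝ),
      f = (fun x => ∑ k, w₃ k *
            max (∑ j, W₂ k j * max (inner ℝ (W₁ j) x + b₁ j : ℝ) 0 + b₂ k) 0) ∧
      HasCompactSupport f ∧
      eLpNorm (fun x => f x - v x) (ENNReal.ofReal p)
        (volume : Measure (EuclideanSpace ℝ (Fin n))) < ENNReal.ofReal δ := by
  set q : ENNReal := ENNReal.ofReal p with hq_def
  have hq1 : (1 : ENNReal) ≤ q := by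
    rw [hq_def]
    exact ENNReal.one_le_ofReal.mpr hp
  have hqt : q ≠ ⊤ := ENNReal.ofReal_ne_top
  have hδ2 : (0 : ENNReal) < ENNReal.ofReal (δ / 2) := ENNReal.ofReal_pos.mpr (by linarith)
  obtain ⟨g, hgsupp, hgapprox, hgcont, _⟩ :=
    hv.exists_hasCompactSupport_eLpNorm_sub_le hqt hδ2.ne'
  obtain ⟨f, hfnet, hfcont, hfsupp, hferr⟩ :=
    net_approx_cont n q hq1 hqt g hgcont hgsupp hδ2
  obtain ⟨h₁, h₂, W₁, b₁, W₂, b₂, w₃, hf_eq⟩ := hfnet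
  refine ⟨h₁, h₂, W₁, b₁, W₂, b₂, w₃, f, hf_eq, hfsupp, ?_⟩
  have htri : eLpNorm (fun x => f x - v x) q volume ≤
      eLpNorm (fun x => f x - g x) q volume + eLpNorm (fun x => g x - v x) q volume := by
    have hdecomp : (fun x => f x - v x) =
        (fun x => f x - g x) + (fun x => g x - v x) := by
      funext x
      simp
    rw [hdecomp]
    exact eLpNorm_add_le (hfcont.aestronglyMeasurable.sub hgcont.aestronglyMeasurable)
      (hgcont.aestronglyMeasurable.sub hv.aestronglyMeasurable) hq1
  have hgv : eLpNorm (fun x => g x - v x) q volume ≤ ENNReal.ofReal (δ / 2) := by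
    have : (fun x => g x - v x) = g - v := rfl
    rw [this, eLpNorm_sub_comm]
    exact hgapprox
  calc eLpNorm (fun x => f x - v x) q volume
      ≤ eLpNorm (fun x => f x - g x) q volume + eLpNorm (fun x => g x - v x) q volume := htri
    _ ≤ eLpNorm (fun x => f x - g x) q volume + ENNReal.ofReal (δ / 2) :=
        add_le_add_right hgv _
    _ < ENNReal.ofReal (δ / 2) + ENNReal.ofReal (δ / 2) :=
        ENNReal.add_lt_add_right ENNReal.ofReal_ne_top hferr
    _ = ENNReal.ofReal δ := by
        rw [← ENNReal.ofReal_add (by linarith) (by linarith)]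
        norm_num
end

section
/- Let Ω ⊂ ℝⁿ be a compact polytope, 𝒯 = {τ₁,...,τ_N} a partition of Ω into compact convex polytopes with pairwise disjoint interiors, and v a function on Ω that is affine on the interior of each τᵢ with ‖v‖_{L^∞(Ω)} = R. Then for every ε > 0 there exists a two-hidden-layer ReLU network f with second hidden layer of N+1 neurons such that f = v on Ω_𝒯^ε := ⋃ᵢ {x ∈ τᵢ : dist(x, ∂τᵢ) ≥ ε} and ‖f‖_{L^∞(Ω)} ≤ R. -/
open scoped RealInnerProductSpace

private lemma deep_margin {n m : ℕ} {τ : Set (EuclideanSpace ℝ (Fin n))}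
    {w : Fin m → EuclideanSpace ℝ (Fin n)} {b : Fin m → ℝ}
    (hw : ∀ j, ‖w j‖ = 1)
    (hmem : ∀ y, y ∈ τ ↔ ∀ j, 0 ≤ ⟪w j, y⟫ + b j)
    {x : EuclideanSpace ℝ (Fin n)} (hx : x ∈ τ)
    {ε : ℝ} (hε : 0 < ε) (hd : ε ≤ Metric.infDist x (frontier τ)) :
    x ∈ interior τ ∧ ∀ j, ε ≤ ⟪w j, x⟫ + b j := by
  have hxnf : x ∉ frontier τ := by
    intro h
    have h1 : Metric.infDist x (frontier τ) ≤ dist x x := Metric.infDist_le_dist_of_mem h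
    rw [dist_self] at h1
    linarith
  have hxint : x ∈ interior τ := by
    by_contra hni
    exact hxnf ⟨subset_closure hx, hni⟩
  have hsub : Metric.ball x ε ⊆ interior τ ∪ (closure τ)ᶜ := by
    intro y hy
    by_cases hyc : y ∈ closure τ
    · left
      by_contra hyi
      have hfr : y ∈ frontier τ := ⟨hyc, hyi⟩
      have h2 : Metric.infDist x (frontier τ) ≤ dist x y :=
        Metric.infDist_le_dist_of_mem hfr
      rw [Metric.mem_ball, dist_comm] at hy
      linarith
    · exact Or.inr hyc
  have hball : Metric.ball x ε ⊆ interior τ :=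
    IsPreconnected.subset_left_of_subset_union isOpen_interior
      isClosed_closure.isOpen_compl
      (disjoint_compl_right.mono_left interior_subset_closure) hsub
      ⟨x, Metric.mem_ball_self hε, hxint⟩ (convex_ball x ε).isPreconnected
  refine ⟨hxint, fun j => ?_⟩
  have key : ∀ t : ℝ, 0 ≤ t → t < ε → t ≤ ⟪w j, x⟫ + b j := by
    intro t ht htε
    have hyb : x - t • w j ∈ Metric.ball x ε := by
      rw [Metric.mem_ball, dist_eq_norm]
      have : x - t • w j - x = -(t • w j) := by abel
      rw [this, norm_neg, norm_smul, hw j]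
      simpa [abs_of_nonneg ht] using htε
    have hyt : 0 ≤ ⟪w j, x - t • w j⟫ + b j :=
      (hmem _).1 (interior_subset (hball hyb)) j
    have hin : ⟪w j, x - t • w j⟫ = ⟪w j, x⟫ - t := by
      rw [inner_sub_right, real_inner_smul_right, real_inner_self_eq_norm_sq, hw j]
      ring
    rw [hin] at hyt
    linarith
  by_contra hcon
  push_neg at hcon
  have h0 : 0 ≤ ⟪w j, x⟫ + b j := (hmem x).1 hx j
  have := key ((⟪w j, x⟫ + b j + ε) / 2) (by linarith) (by linarith)
  linarith

private lemma exists_nonpos_of_not_interior {n m : ℕ} {τ : Set (EuclideanSpace ℝ (Fin n))}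
    {w : Fin m → EuclideanSpace ℝ (Fin n)} {b : Fin m → ℝ}
    (hmem : ∀ y, y ∈ τ ↔ ∀ j, 0 ≤ ⟪w j, y⟫ + b j)
    {x : EuclideanSpace ℝ (Fin n)} (hx : x ∉ interior τ) :
    ∃ j, ⟪w j, x⟫ + b j ≤ 0 := by
  by_contra hcon
  push_neg at hcon
  have hU : IsOpen {y : EuclideanSpace ℝ (Fin n) | ∀ j, 0 < ⟪w j, y⟫ + b j} := by
    have h1 : {y : EuclideanSpace ℝ (Fin n) | ∀ j, 0 < ⟪w j, y⟫ + b j}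
        = ⋂ j, {y | 0 < ⟪w j, y⟫ + b j} := by
      ext y; simp [Set.mem_iInter]
    rw [h1]
    exact isOpen_iInter_of_finite fun j =>
      isOpen_lt continuous_const ((continuous_const.inner continuous_id).add continuous_const)
  refine hx (interior_maximal (fun y hy => (hmem y).2 fun j => ?_) hU hcon)
  rw [Set.mem_setOf_eq] at hy
  exact le_of_lt (hy j)

/-- Weak representation theorem.  Let Ω be a compact polytopal domain partitioned
into compact convex polytopes τ₁,...,τ_N with pairwise disjoint interiors, and let v be affine
on the interior of each cell with ‖v‖_{L^∞(Ω)} ≤ R (R attained as a sup bound).  Then for every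
ε > 0 there is a two-hidden-layer ReLU network f, whose second hidden layer has N+1 neurons,
with f = v on Ω_𝒯^ε = ⋃ᵢ {x ∈ τᵢ : dist(x, ∂τᵢ) ≥ ε} and |f| ≤ R on Ω. -/
theorem weak_representation
    (n N : ℕ)
    (Ω : Set (EuclideanSpace ℝ (Fin n))) (hΩc : IsCompact Ω)
    (τ : Fin N → Set (EuclideanSpace ℝ (Fin n)))
    (hτc : ∀ i, IsCompact (τ i))
    (hτpoly : ∀ i, ∃ (m : ℕ) (w : Fin m → EuclideanSpace ℝ (Fin n)) (b : Fin m → ℝ),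
      (∀ j, w j ≠ 0) ∧ τ i = {x | ∀ j, ⟪w j, x⟫ + b j ≥ 0})
    (hτint : ∀ i, (interior (τ i)).Nonempty)
    (hcover : Ω = ⋃ i, τ i)
    (hdisj : ∀ i j, i ≠ j → interior (τ i) ∩ interior (τ j) = ∅)
    (v : EuclideanSpace ℝ (Fin n) → ℝ)
    (haff : ∀ i, ∃ (a : EuclideanSpace ℝ (Fin n)) (c : ℝ),
      ∀ x ∈ interior (τ i), v x = ⟪a, x⟫ + c)
    (R : ℝ) (hR : ∀ x ∈ Ω, |v x| ≤ R)
    (ε : ℝ) (hε : 0 < ε) :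
    ∃ (h₁ : ℕ) (W₁ : Fin h₁ → EuclideanSpace ℝ (Fin n)) (b₁ : Fin h₁ → ℝ)
      (W₂ : Fin (N + 1) → Fin h₁ → ℝ) (b₂ : Fin (N + 1) → ℝ) (w₃ : Fin (N + 1) → ℝ)
      (f : EuclideanSpace ℝ (Fin n) → ℝ),
      f = (fun x => ∑ k, w₃ k *
            max (∑ j, W₂ k j * max (⟪W₁ j, x⟫ + b₁ j) 0 + b₂ k) 0) ∧
      (∀ x ∈ ⋃ i, {x ∈ τ i | ε ≤ Metric.infDist x (frontier (τ i))}, f x = v x) ∧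
      (∀ x ∈ Ω, |f x| ≤ R) := by
  classical
  rcases Set.eq_empty_or_nonempty Ω with hΩe | hΩne
  · -- Ω is empty: all claims are vacuous.
    refine ⟨0, (fun j => j.elim0), (fun j => j.elim0), fun _ j => j.elim0, fun _ => 0,
      fun _ => 0, _, rfl, ?_, ?_⟩
    · intro x hx
      simp only [Set.mem_iUnion, Set.mem_setOf_eq] at hx
      obtain ⟨i, hxi, -⟩ := hx
      have : x ∈ Ω := by rw [hcover]; exact Set.mem_iUnion.2 ⟨i, hxi⟩
      rw [hΩe] at this
      exact absurd this (Set.notMem_empty x)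
    · intro x hx
      rw [hΩe] at hx
      exact absurd hx (Set.notMem_empty x)
  -- Main case.
  obtain ⟨x₀, hx₀⟩ := hΩne
  have hR0 : 0 ≤ R := le_trans (abs_nonneg _) (hR x₀ hx₀)
  have hτΩ : ∀ i, τ i ⊆ Ω := fun i => by rw [hcover]; exact Set.subset_iUnion τ i
  choose m w b hw hτeq using hτpoly
  choose a c haffv using haff
  set w' : ∀ i, Fin (m i) → EuclideanSpace ℝ (Fin n) := fun i j => ‖w i j‖⁻¹ • w i j with hw'def
  set b' : ∀ i, Fin (m i) → ℝ := fun i j => ‖w i j‖⁻¹ * b i j with hb'def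
  have hwn : ∀ i j, ‖w' i j‖ = 1 := fun i j => norm_smul_inv_norm (hw i j)
  have hmem : ∀ i y, y ∈ τ i ↔ ∀ j, 0 ≤ ⟪w' i j, y⟫ + b' i j := by
    intro i y
    rw [hτeq i]
    simp only [Set.mem_setOf_eq, ge_iff_le]
    refine forall_congr' fun j => ?_
    have hpos : 0 < ‖w i j‖⁻¹ := inv_pos.2 (norm_pos_iff.2 (hw i j))
    rw [hw'def, hb'def, real_inner_smul_left, ← mul_add, mul_nonneg_iff_of_pos_left hpos]
  -- convexity of the cells
  have hconv : ∀ i, Convex ℝ (τ i) := by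
    intro i
    rw [hτeq i]
    have h1 : {x : EuclideanSpace ℝ (Fin n) | ∀ j, ⟪w i j, x⟫ + b i j ≥ 0}
        = ⋂ j, {x | -(b i j) ≤ ⟪w i j, x⟫} := by
      ext y
      simp only [Set.mem_setOf_eq, Set.mem_iInter, ge_iff_le]
      exact ⟨fun h j => by linarith [h j], fun h j => by linarith [h j]⟩
    rw [h1]
    exact convex_iInter fun j => convex_halfSpace_ge
      ⟨fun p r => by rw [inner_add_right], fun r p => by rw [real_inner_smul_right, smul_eq_mul]⟩ _
  -- boundedness of v's affine pieces on the whole cell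
  have habs : ∀ i, ∀ x ∈ τ i, |⟪a i, x⟫ + c i| ≤ R := by
    intro i x hx
    obtain ⟨y, hy⟩ := hτint i
    have hclosed : IsClosed {z : EuclideanSpace ℝ (Fin n) | |⟪a i, z⟫ + c i| ≤ R} :=
      isClosed_le (Continuous.abs ((continuous_const.inner continuous_id).add
        continuous_const)) continuous_const
    have hsub : interior (τ i) ⊆ {z : EuclideanSpace ℝ (Fin n) | |⟪a i, z⟫ + c i| ≤ R} := by
      intro z hz
      have : v z = ⟪a i, z⟫ + c i := haffv i z hz
      simp only [Set.mem_setOf_eq, ← this]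
      exact hR z (hτΩ i (interior_subset hz))
    have hxcl : x ∈ closure (interior (τ i)) := by
      have hc : Continuous (fun t : ℝ => x + t • (y - x)) :=
        continuous_const.add (continuous_id.smul continuous_const)
      have htend : Filter.Tendsto (fun t : ℝ => x + t • (y - x))
          (nhdsWithin 0 (Set.Ioi 0)) (nhds x) := by
        have h2 := hc.tendsto 0
        simp only [zero_smul, add_zero] at h2
        exact h2.mono_left nhdsWithin_le_nhds
      refine mem_closure_of_tendsto htend ?_
      filter_upwards [Ioo_mem_nhdsGT_of_mem (Set.left_mem_Ico.2 one_pos)] with t ht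
      have heq : x + t • (y - x) = (1 - t) • x + t • y := by
        rw [smul_sub, sub_smul, one_smul]; abel
      rw [heq]
      exact (hconv i).combo_closure_interior_mem_interior (subset_closure hx) hy
        (by linarith [ht.2]) ht.1 (by ring)
    exact closure_minimal hsub hclosed hxcl
  -- bounds on the linear parts over Ω
  have hCex : ∀ i, ∃ CC : ℝ, ∀ x ∈ Ω, |⟪a i, x⟫| ≤ CC := by
    intro i
    obtain ⟨CC, hCC⟩ := hΩc.exists_bound_of_continuousOn (f := fun y => ⟪a i, y⟫)
      (Continuous.continuousOn (continuous_const.inner continuous_id))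
    exact ⟨CC, fun x hx => by simpa [Real.norm_eq_abs] using hCC x hx⟩
  choose C hC using hCex
  have hC0 : ∀ i, 0 ≤ C i := fun i => le_trans (abs_nonneg _) (hC i x₀ hx₀)
  set M : Fin N → ℝ := fun i => (C i + |c i| + R) / ε with hMdef
  have hM0 : ∀ i, 0 ≤ M i := fun i =>
    div_nonneg (by have := hC0 i; have := abs_nonneg (c i); linarith) hε.le
  have hMε : ∀ i, M i * ε = C i + |c i| + R := fun i => div_mul_cancel₀ _ hε.ne'
  -- the "distance to the boundary" gadget
  set q : Fin N → EuclideanSpace ℝ (Fin n) → ℝ :=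
    fun i x => ∑ j, max (ε - (⟪w' i j, x⟫ + b' i j)) 0 with hqdef
  have hqnn : ∀ i x, 0 ≤ q i x := by
    intro i x
    rw [hqdef]
    exact Finset.sum_nonneg fun j _ => le_max_right _ _
  -- the second-layer neurons (as functions)
  set g : Fin N → EuclideanSpace ℝ (Fin n) → ℝ :=
    fun i x => max (max (⟪a i, x⟫ + C i) 0 + (c i - C i + R) - M i * q i x) 0 with hgdef
  have hgnn : ∀ i x, 0 ≤ g i x := fun i x => le_max_right _ _
  -- g vanishes off the interior of its cell (within Ω)
  have hgout : ∀ i, ∀ x ∈ Ω, x ∉ interior (τ i) → g i x = 0 := by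
    intro i x hxΩ hnint
    obtain ⟨j, hj⟩ := exists_nonpos_of_not_interior (hmem i) hnint
    have hqge : ε ≤ q i x := by
      have hterm : ε ≤ max (ε - (⟪w' i j, x⟫ + b' i j)) 0 :=
        le_trans (by linarith) (le_max_left _ _)
      refine le_trans hterm ?_
      simp only [hqdef]
      exact Finset.single_le_sum
        (f := fun j' : Fin (m i) => max (ε - (⟪w' i j', x⟫ + b' i j')) 0)
        (fun j' _ => le_max_right _ _) (Finset.mem_univ j)
    have hMq : C i + |c i| + R ≤ M i * q i x := by
      have h2 : M i * ε ≤ M i * q i x := mul_le_mul_of_nonneg_left hqge (hM0 i)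
      rw [hMε i] at h2
      exact h2
    have habsC := abs_le.1 (hC i x hxΩ)
    have ha0 : 0 ≤ ⟪a i, x⟫ + C i := by linarith [habsC.1]
    have hcc : c i ≤ |c i| := le_abs_self _
    have harg : max (⟪a i, x⟫ + C i) 0 + (c i - C i + R) - M i * q i x ≤ 0 := by
      rw [max_eq_left ha0]
      linarith [habsC.2]
    rw [hgdef]
    exact max_eq_right harg
  -- on deep points g computes v + R
  have hgdeep : ∀ i, ∀ x ∈ τ i, ε ≤ Metric.infDist x (frontier (τ i)) →
      x ∈ interior (τ i) ∧ g i x = v x + R := by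
    intro i x hxi hxd
    obtain ⟨hxint, hmarg⟩ := deep_margin (hwn i) (hmem i) hxi hε hxd
    have hxΩ : x ∈ Ω := hτΩ i hxi
    have hq0 : q i x = 0 := by
      rw [hqdef]
      exact Finset.sum_eq_zero fun j _ => max_eq_right (by linarith [hmarg j])
    have habsC := abs_le.1 (hC i x hxΩ)
    have ha0 : 0 ≤ ⟪a i, x⟫ + C i := by linarith [habsC.1]
    have hvx : v x = ⟪a i, x⟫ + c i := haffv i x hxint
    have hvR : -R ≤ v x := (abs_le.1 (hR x hxΩ)).1
    refine ⟨hxint, ?_⟩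
    rw [hgdef]
    simp only [hq0, mul_zero, sub_zero, max_eq_left ha0]
    have harg : ⟪a i, x⟫ + C i + (c i - C i + R) = v x + R := by rw [hvx]; ring
    rw [harg]
    exact max_eq_left (by linarith)
  -- g is bounded by 2R on its cell
  have hg2R : ∀ i, ∀ x ∈ τ i, g i x ≤ 2 * R := by
    intro i x hxτ
    have hxΩ : x ∈ Ω := hτΩ i hxτ
    have h1 := abs_le.1 (habs i x hxτ)
    have habsC := abs_le.1 (hC i x hxΩ)
    have ha0 : 0 ≤ ⟪a i, x⟫ + C i := by linarith [habsC.1]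
    have hMq0 : 0 ≤ M i * q i x := mul_nonneg (hM0 i) (hqnn i x)
    rw [hgdef]
    refine max_le ?_ (by linarith)
    rw [max_eq_left ha0]
    linarith [h1.2]
  -- the network
  set e : ((Σ i : Fin N, Fin (m i)) ⊕ Fin N) ≃
      Fin (Fintype.card ((Σ i : Fin N, Fin (m i)) ⊕ Fin N)) :=
    Fintype.equivFin _ with he
  set W1 : ((Σ i : Fin N, Fin (m i)) ⊕ Fin N) → EuclideanSpace ℝ (Fin n) :=
    Sum.elim (fun p => -(w' p.1 p.2)) a with hW1
  set B1 : ((Σ i : Fin N, Fin (m i)) ⊕ Fin N) → ℝ := Sum.elim (fun p => ε - b' p.1 p.2) C with hB1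
  set W2 : Fin (N + 1) → ((Σ i : Fin N, Fin (m i)) ⊕ Fin N) → ℝ := fun k => Sum.elim
      (fun p => if (p.1 : ℕ) = (k : ℕ) then -(M p.1) else 0)
      (fun i' => if (i' : ℕ) = (k : ℕ) then 1 else 0) with hW2
  refine ⟨Fintype.card ((Σ i : Fin N, Fin (m i)) ⊕ Fin N),
    fun j => W1 (e.symm j), fun j => B1 (e.symm j),
    fun k j => W2 k (e.symm j),
    fun k => if hk : (k : ℕ) < N then c ⟨(k : ℕ), hk⟩ - C ⟨(k : ℕ), hk⟩ + R else R,
    fun k => if (k : ℕ) < N then 1 else -1,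
    fun x => (∑ i, g i x) - R, ?_, ?_, ?_⟩
  · -- the function is computed by the network
    funext x
    have hA : ∀ k : Fin (N + 1),
        (∑ j : Fin (Fintype.card ((Σ i : Fin N, Fin (m i)) ⊕ Fin N)), W2 k (e.symm j) * max (⟪W1 (e.symm j), x⟫ + B1 (e.symm j)) 0)
        = ∑ p : ((Σ i : Fin N, Fin (m i)) ⊕ Fin N), W2 k p * max (⟪W1 p, x⟫ + B1 p) 0 :=
      fun k => Equiv.sum_comp e.symm (fun p => W2 k p * max (⟪W1 p, x⟫ + B1 p) 0)
    have hcast : ∀ i : Fin N,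
        (∑ p : ((Σ i : Fin N, Fin (m i)) ⊕ Fin N), W2 (Fin.castSucc i) p * max (⟪W1 p, x⟫ + B1 p) 0)
        = max (⟪a i, x⟫ + C i) 0 - M i * q i x := by
      intro i
      rw [Fintype.sum_sum_type]
      have hpart2 : ∑ i' : Fin N,
          W2 (Fin.castSucc i) (Sum.inr i') * max (⟪W1 (Sum.inr i'), x⟫ + B1 (Sum.inr i')) 0
          = max (⟪a i, x⟫ + C i) 0 := by
        rw [hW2, hW1, hB1]
        simp only [Sum.elim_inr, Fin.coe_castSucc, Fin.val_eq_val]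
        rw [Finset.sum_eq_single i]
        · simp
        · intro i' _ hne
          simp [hne]
        · intro h
          exact absurd (Finset.mem_univ i) h
      have hterm1 : ∀ (i' : Fin N) (j' : Fin (m i')),
          W2 (Fin.castSucc i) (Sum.inl ⟨i', j'⟩) *
            max (⟪W1 (Sum.inl ⟨i', j'⟩), x⟫ + B1 (Sum.inl ⟨i', j'⟩)) 0
          = if i' = i then -M i * max (ε - (⟪w' i' j', x⟫ + b' i' j')) 0 else 0 := by
        intro i' j'
        rw [hW2, hW1, hB1]
        simp only [Sum.elim_inl]
        have harg : ⟪-(w' i' j'), x⟫ + (ε - b' i' j') = ε - (⟪w' i' j', x⟫ + b' i' j') := by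
          rw [inner_neg_left]; ring
        rw [harg]
        by_cases h : i' = i
        · subst h
          rw [if_pos (Fin.coe_castSucc i').symm, if_pos rfl]
        · rw [if_neg (fun hc => h (Fin.ext (by rw [hc, Fin.coe_castSucc]))), if_neg h, zero_mul]
      have hpart1 : ∑ p : (Σ i' : Fin N, Fin (m i')),
          W2 (Fin.castSucc i) (Sum.inl p) * max (⟪W1 (Sum.inl p), x⟫ + B1 (Sum.inl p)) 0
          = -(M i * q i x) := by
        calc ∑ p : (Σ i' : Fin N, Fin (m i')),
            W2 (Fin.castSucc i) (Sum.inl p) * max (⟪W1 (Sum.inl p), x⟫ + B1 (Sum.inl p)) 0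
            = ∑ p : (Σ i' : Fin N, Fin (m i')),
              (if p.1 = i then -M i * max (ε - (⟪w' p.1 p.2, x⟫ + b' p.1 p.2)) 0 else 0) := by
              refine Finset.sum_congr rfl fun p _ => ?_
              obtain ⟨i', j'⟩ := p
              exact hterm1 i' j'
          _ = ∑ i' : Fin N, ∑ j' : Fin (m i'),
              (if i' = i then -M i * max (ε - (⟪w' i' j', x⟫ + b' i' j')) 0 else 0) := by
              rw [← Finset.univ_sigma_univ, Finset.sum_sigma]
          _ = ∑ i' : Fin N, (if i' = i then
              ∑ j' : Fin (m i'), -M i * max (ε - (⟪w' i' j', x⟫ + b' i' j')) 0 else 0) := by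
              refine Finset.sum_congr rfl fun i' _ => ?_
              split
              · rfl
              · exact Finset.sum_const_zero
          _ = ∑ j' : Fin (m i), -M i * max (ε - (⟪w' i j', x⟫ + b' i j')) 0 := by
              rw [Finset.sum_ite_eq' Finset.univ i]
              simp
          _ = -(M i * q i x) := by
              rw [hqdef, ← Finset.mul_sum, neg_mul]
      rw [hpart1, hpart2]
      ring
    have hlastsum : (∑ p : ((Σ i : Fin N, Fin (m i)) ⊕ Fin N), W2 (Fin.last N) p * max (⟪W1 p, x⟫ + B1 p) 0) = 0 := by
      rw [Fintype.sum_sum_type]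
      have h1 : ∑ p : (Σ i' : Fin N, Fin (m i')),
          W2 (Fin.last N) (Sum.inl p) * max (⟪W1 (Sum.inl p), x⟫ + B1 (Sum.inl p)) 0 = 0 := by
        rw [hW2]
        refine Finset.sum_eq_zero fun p _ => ?_
        simp only [Sum.elim_inl, Fin.val_last]
        rw [if_neg (Nat.ne_of_lt p.1.isLt), zero_mul]
      have h2 : ∑ i' : Fin N,
          W2 (Fin.last N) (Sum.inr i') * max (⟪W1 (Sum.inr i'), x⟫ + B1 (Sum.inr i')) 0 = 0 := by
        rw [hW2]
        refine Finset.sum_eq_zero fun i' _ => ?_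
        simp only [Sum.elim_inr, Fin.val_last]
        rw [if_neg (Nat.ne_of_lt i'.isLt), zero_mul]
      rw [h1, h2, add_zero]
    rw [Fin.sum_univ_castSucc]
    have hterm : ∀ i : Fin N,
        (if ((Fin.castSucc i : Fin (N + 1)) : ℕ) < N then (1 : ℝ) else -1) *
          max ((∑ j : Fin (Fintype.card ((Σ i : Fin N, Fin (m i)) ⊕ Fin N)),
            W2 (Fin.castSucc i) (e.symm j) *
              max (⟪W1 (e.symm j), x⟫ + B1 (e.symm j)) 0) +
            (if hk : ((Fin.castSucc i : Fin (N + 1)) : ℕ) < N then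
              c ⟨((Fin.castSucc i : Fin (N + 1)) : ℕ), hk⟩ -
                C ⟨((Fin.castSucc i : Fin (N + 1)) : ℕ), hk⟩ + R else R)) 0
        = g i x := by
      intro i
      have hlt : ((Fin.castSucc i : Fin (N + 1)) : ℕ) < N := by
        simp [Fin.coe_castSucc, i.isLt]
      rw [if_pos hlt, dif_pos hlt, one_mul, hA, hcast i]
      have hfin : (⟨((Fin.castSucc i : Fin (N + 1)) : ℕ), hlt⟩ : Fin N) = i := by
        apply Fin.ext
        simp [Fin.coe_castSucc]
      rw [hfin, hgdef]
      congr 1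
      ring
    have hlastterm :
        (if ((Fin.last N : Fin (N + 1)) : ℕ) < N then (1 : ℝ) else -1) *
          max ((∑ j : Fin (Fintype.card ((Σ i : Fin N, Fin (m i)) ⊕ Fin N)),
            W2 (Fin.last N) (e.symm j) *
              max (⟪W1 (e.symm j), x⟫ + B1 (e.symm j)) 0) +
            (if hk : ((Fin.last N : Fin (N + 1)) : ℕ) < N then
              c ⟨((Fin.last N : Fin (N + 1)) : ℕ), hk⟩ -
                C ⟨((Fin.last N : Fin (N + 1)) : ℕ), hk⟩ + R else R)) 0 = -R := by
      have hnlt : ¬ ((Fin.last N : Fin (N + 1)) : ℕ) < N := by simp [Fin.val_last]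
      rw [if_neg hnlt, dif_neg hnlt, hA, hlastsum, zero_add, max_eq_left hR0]
      ring
    rw [Finset.sum_congr rfl (fun i _ => hterm i), hlastterm]
    ring
  · -- f = v on the deep region
    intro x hx
    simp only [Set.mem_iUnion, Set.mem_setOf_eq] at hx
    obtain ⟨i, hxi, hxd⟩ := hx
    obtain ⟨hxint, hgi⟩ := hgdeep i x hxi hxd
    have hxΩ : x ∈ Ω := hτΩ i hxi
    have hsum : (∑ i', g i' x) = g i x := by
      refine Finset.sum_eq_single i ?_ ?_
      · intro i' _ hne
        refine hgout i' x hxΩ ?_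
        intro hmem'
        have hd := hdisj i' i hne
        have : x ∈ interior (τ i') ∩ interior (τ i) := ⟨hmem', hxint⟩
        rw [hd] at this
        exact absurd this (Set.notMem_empty x)
      · intro h
        exact absurd (Finset.mem_univ i) h
    show (∑ i', g i' x) - R = v x
    rw [hsum, hgi]
    ring
  · -- |f| ≤ R on Ω
    intro x hxΩ
    have hsum0 : 0 ≤ ∑ i, g i x := Finset.sum_nonneg fun i _ => hgnn i x
    have hsum2 : (∑ i, g i x) ≤ 2 * R := by
      by_cases hexi : ∃ i, x ∈ interior (τ i)
      · obtain ⟨i, hxint⟩ := hexi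
        have hsum : (∑ i', g i' x) = g i x := by
          refine Finset.sum_eq_single i ?_ ?_
          · intro i' _ hne
            refine hgout i' x hxΩ ?_
            intro hmem'
            have hd := hdisj i' i hne
            have : x ∈ interior (τ i') ∩ interior (τ i) := ⟨hmem', hxint⟩
            rw [hd] at this
            exact absurd this (Set.notMem_empty x)
          · intro h
            exact absurd (Finset.mem_univ i) h
        rw [hsum]
        exact hg2R i x (interior_subset hxint)
      · push_neg at hexi
        rw [Finset.sum_eq_zero fun i _ => hgout i x hxΩ (hexi i)]
        linarith
    show |(∑ i, g i x) - R| ≤ R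
    rw [abs_le]
    constructor <;> linarith
end

section
/- Let Ω, 𝒯, and v be as in the weak representation theorem (v piecewise affine on a convex polytope mesh of Ω). Then v lies in the Lᵖ(Ω)-closure of the set of two-hidden-layer ReLU networks, for every 1 ≤ p < ∞. That is, for every δ > 0 there is a two-hidden-layer ReLU network f with ‖f - v‖_{Lᵖ(Ω)} < δ. -/
open scoped RealInnerProductSpace
open MeasureTheory Filter Topology

set_option maxHeartbeats 1000000 in
/-- A piecewise affine function v on a convex polytope mesh of a compact
polytopal domain Ω lies in the Lᵖ(Ω)-closure of two-hidden-layer ReLU networks (1 ≤ p < ∞):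
for every δ > 0 there is a two-hidden-layer ReLU network f with ‖f - v‖_{Lᵖ(Ω)} < δ. -/
theorem weak_representation_Lp_closure
    (n N : ℕ)
    (Ω : Set (EuclideanSpace ℝ (Fin n))) (hΩc : IsCompact Ω)
    (τ : Fin N → Set (EuclideanSpace ℝ (Fin n)))
    (hτc : ∀ i, IsCompact (τ i))
    (hτpoly : ∀ i, ∃ (m : ℕ) (w : Fin m → EuclideanSpace ℝ (Fin n)) (b : Fin m → ℝ),
      (∀ j, w j ≠ 0) ∧ τ i = {x | ∀ j, ⟪w j, x⟫ + b j ≥ 0})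
    (hτint : ∀ i, (interior (τ i)).Nonempty)
    (hcover : Ω = ⋃ i, τ i)
    (hdisj : ∀ i j, i ≠ j → interior (τ i) ∩ interior (τ j) = ∅)
    (v : EuclideanSpace ℝ (Fin n) → ℝ)
    (haff : ∀ i, ∃ (a : EuclideanSpace ℝ (Fin n)) (c : ℝ),
      ∀ x ∈ interior (τ i), v x = ⟪a, x⟫ + c)
    (R : ℝ) (hR : ∀ x ∈ Ω, |v x| ≤ R)
    (p : ℝ) (hp : 1 ≤ p)
    (δ : ℝ) (hδ : 0 < δ) :
    ∃ (h₁ h₂ : ℕ) (W₁ : Fin h₁ → EuclideanSpace ℝ (Fin n)) (b₁ : Fin h₁ → ℝ)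
      (W₂ : Fin h₂ → Fin h₁ → ℝ) (b₂ : Fin h₂ → ℝ) (w₃ : Fin h₂ → ℝ)
      (f : EuclideanSpace ℝ (Fin n) → ℝ),
      f = (fun x => ∑ k, w₃ k *
            max (∑ j, W₂ k j * max (⟪W₁ j, x⟫ + b₁ j) 0 + b₂ k) 0) ∧
      eLpNorm (fun x => f x - v x) (ENNReal.ofReal p)
        ((volume : Measure (EuclideanSpace ℝ (Fin n))).restrict Ω) < ENNReal.ofReal δ := by
  classical
  -- extract data
  choose m w bb hw hτeq using hτpoly
  choose a c haff' using haff
  set m' : ℕ := Finset.univ.sup m with hm'def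
  have hm'le : ∀ i, m i ≤ m' := fun i => Finset.le_sup (Finset.mem_univ i)
  set Wp : Fin N → Fin m' → EuclideanSpace ℝ (Fin n) :=
    fun i j => if h : (j : ℕ) < m i then w i ⟨j, h⟩ else 0 with hWp
  set Bp : Fin N → Fin m' → ℝ :=
    fun i j => if h : (j : ℕ) < m i then bb i ⟨j, h⟩ else 0 with hBp
  have hτeq' : ∀ i, τ i = {x | ∀ j : Fin m', ⟪Wp i j, x⟫ + Bp i j ≥ 0} := by
    intro i; rw [hτeq i]; ext x; simp only [Set.mem_setOf_eq]
    constructor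
    · intro h j
      by_cases hj : (j : ℕ) < m i
      · simpa [Wp, Bp, hj] using h ⟨j, hj⟩
      · simp [Wp, Bp, hj]
    · intro h j
      have := h ⟨j, lt_of_lt_of_le j.2 (hm'le i)⟩
      simpa [Wp, Bp, j.2, Fin.eta] using this
  -- convexity
  have hτconv : ∀ i, Convex ℝ (τ i) := by
    intro i; rw [hτeq' i]
    have heq : {x : EuclideanSpace ℝ (Fin n) | ∀ j : Fin m', ⟪Wp i j, x⟫ + Bp i j ≥ 0}
        = ⋂ j, {x | -(Bp i j) ≤ ⟪Wp i j, x⟫} := by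
      ext x; simp only [Set.mem_iInter, Set.mem_setOf_eq]
      constructor <;> intro h j <;> linarith [h j]
    rw [heq]
    refine convex_iInter fun j => convex_halfSpace_ge ?_ _
    exact (innerSL ℝ (Wp i j)).toLinearMap.isLinear
  -- bound on affine pieces
  have hub : ∀ i, ∃ Mi : ℝ, ∀ x ∈ Ω, |⟪a i, x⟫ + c i| ≤ Mi := by
    intro i
    obtain ⟨Mi, hMi⟩ := hΩc.exists_bound_of_continuousOn
      (f := fun x => ⟪a i, x⟫ + c i)
      ((continuous_const.inner continuous_id).add continuous_const).continuousOn
    exact ⟨Mi, fun x hx => by simpa using hMi x hx⟩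
  choose Mb hMb using hub
  set M : ℝ := 1 + ∑ i, |Mb i| with hMdef
  have hM1 : (1:ℝ) ≤ M := by
    have : (0:ℝ) ≤ ∑ i, |Mb i| := Finset.sum_nonneg fun i _ => abs_nonneg _
    simp [hMdef]; linarith
  have hM0 : (0:ℝ) ≤ M := by linarith
  have hMi : ∀ i, ∀ x ∈ Ω, |⟪a i, x⟫ + c i| ≤ M := by
    intro i x hx
    have h1 := hMb i x hx
    have h2 : Mb i ≤ |Mb i| := le_abs_self _
    have h3 : |Mb i| ≤ ∑ j, |Mb j| :=
      Finset.single_le_sum (f := fun j => |Mb j|) (fun j _ => abs_nonneg _) (Finset.mem_univ i)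
    simp only [hMdef]; linarith
  -- slack function
  set S : Fin N → EuclideanSpace ℝ (Fin n) → ℝ :=
    fun i x => ∑ j, max (-(⟪Wp i j, x⟫ + Bp i j)) 0 with hSdef
  have hS0 : ∀ i x, 0 ≤ S i x := fun i x =>
    Finset.sum_nonneg fun j _ => le_max_right _ _
  have hScont : ∀ i, Continuous (S i) := by
    intro i
    exact continuous_finset_sum _ fun j _ =>
      (((continuous_const.inner continuous_id).add continuous_const).neg).max continuous_const
  have hSmem : ∀ i x, x ∈ τ i ↔ S i x = 0 := by
    intro i x
    rw [hτeq' i]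
    simp only [Set.mem_setOf_eq, hSdef]
    constructor
    · intro h
      refine Finset.sum_eq_zero fun j _ => max_eq_right ?_
      have := h j; linarith
    · intro h j
      have hz := (Finset.sum_eq_zero_iff_of_nonneg (fun j _ => le_max_right _ _)).mp h j
        (Finset.mem_univ j)
      have : -(⟪Wp i j, x⟫ + Bp i j) ≤ 0 := by
        by_contra hc
        push_neg at hc
        have := max_eq_left (le_of_lt hc)
        rw [this] at hz; linarith
      linarith
  have hSpos : ∀ i x, x ∉ τ i → 0 < S i x := by
    intro i x hx
    rcases lt_or_eq_of_le (hS0 i x) with h | h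
    · exact h
    · exact absurd ((hSmem i x).mpr h.symm) hx
  -- the bump functions
  set F : ℝ → Fin N → EuclideanSpace ℝ (Fin n) → ℝ :=
    fun lam i x => max (max (⟪a i, x⟫ + c i + M) 0 - lam * S i x) 0
      - max (M - lam * S i x) 0 with hFdef
  have hFτ : ∀ (lam : ℝ) i x, x ∈ Ω → x ∈ τ i → F lam i x = ⟪a i, x⟫ + c i := by
    intro lam i x hxΩ hxτ
    have hs : S i x = 0 := (hSmem i x).mp hxτ
    have hu : -M ≤ ⟪a i, x⟫ + c i := (abs_le.mp (hMi i x hxΩ)).1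
    simp only [hFdef, hs, mul_zero, sub_zero]
    rw [max_eq_left (le_max_right _ _), max_eq_left hM0,
      max_eq_left (by linarith : (0:ℝ) ≤ ⟪a i, x⟫ + c i + M)]
    ring
  have hFfar : ∀ (lam : ℝ) i x, x ∈ Ω → 2 * M ≤ lam * S i x → F lam i x = 0 := by
    intro lam i x hxΩ hfar
    have hu : ⟪a i, x⟫ + c i ≤ M := (abs_le.mp (hMi i x hxΩ)).2
    have h1 : max (⟪a i, x⟫ + c i + M) 0 ≤ 2 * M := by
      apply max_le <;> linarith
    simp only [hFdef]
    rw [max_eq_right (by linarith), max_eq_right (by linarith), sub_zero]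
  have hFbd : ∀ (lam : ℝ) i x, x ∈ Ω → |F lam i x| ≤ M := by
    intro lam i x hxΩ
    have hu : ⟪a i, x⟫ + c i ≤ M := (abs_le.mp (hMi i x hxΩ)).2
    have h1 : max (⟪a i, x⟫ + c i + M) 0 ≤ 2 * M := by
      apply max_le <;> linarith
    have h2 : (0:ℝ) ≤ max (⟪a i, x⟫ + c i + M) 0 := le_max_right _ _
    have key := abs_max_sub_max_le_abs
      (max (⟪a i, x⟫ + c i + M) 0 - lam * S i x) (M - lam * S i x) 0
    have harg : max (⟪a i, x⟫ + c i + M) 0 - lam * S i x - (M - lam * S i x)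
        = max (⟪a i, x⟫ + c i + M) 0 - M := by ring
    rw [harg] at key
    refine le_trans key (abs_le.mpr ⟨by linarith, by linarith⟩)
  -- constants
  set C' : ℝ := (N:ℝ) * M + |R| + 1 with hC'def
  have hC'pos : 0 < C' := by
    have : (0:ℝ) ≤ (N:ℝ) * M := mul_nonneg (Nat.cast_nonneg N) hM0
    have := abs_nonneg R
    simp only [hC'def]; linarith
  -- bad sets
  set D : Fin N → ℕ → Set (EuclideanSpace ℝ (Fin n)) :=
    fun j k => {x | x ∈ Ω ∧ x ∉ τ j ∧ (k:ℝ) * S j x < 2 * M} with hDdef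
  have hΩm : MeasurableSet Ω := hΩc.measurableSet
  have hτm : ∀ i, MeasurableSet (τ i) := fun i => (hτc i).measurableSet
  have hDmeas : ∀ j k, MeasurableSet (D j k) := by
    intro j k
    have h1 : MeasurableSet {x : EuclideanSpace ℝ (Fin n) | (k:ℝ) * S j x < 2 * M} :=
      measurableSet_lt (by fun_prop) measurable_const
    have : D j k = Ω ∩ ((τ j)ᶜ ∩ {x | (k:ℝ) * S j x < 2 * M}) := by
      ext x
      simp only [hDdef, Set.mem_setOf_eq, Set.mem_inter_iff, Set.mem_compl_iff]
    rw [this]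
    exact hΩm.inter ((hτm j).compl.inter h1)
  have hDanti : ∀ j, Antitone (fun k => D j k) := by
    intro j k k' hkk' x hx
    obtain ⟨h1, h2, h3⟩ := hx
    refine ⟨h1, h2, lt_of_le_of_lt ?_ h3⟩
    exact mul_le_mul_of_nonneg_right (by exact_mod_cast hkk') (hS0 j x)
  have hDempty : ∀ j, (⋂ k, D j k) = ∅ := by
    intro j
    ext x; simp only [Set.mem_iInter, Set.mem_empty_iff_false, iff_false]
    intro h
    obtain ⟨h1, h2, _⟩ := h 0
    have hpos := hSpos j x h2
    obtain ⟨k, hk⟩ := exists_nat_gt (2 * M / S j x)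
    have h3 := (h k).2.2
    rw [div_lt_iff₀ hpos] at hk
    linarith
  have hDtend : ∀ j, Tendsto (fun k => volume (D j k)) atTop (𝓝 0) := by
    intro j
    have := MeasureTheory.tendsto_measure_iInter_atTop (μ := volume)
      (s := fun k => D j k) (fun k => (hDmeas j k).nullMeasurableSet) (hDanti j)
      ⟨0, (lt_of_le_of_lt (measure_mono (fun x hx => hx.1)) hΩc.measure_lt_top).ne⟩
    rw [hDempty j, measure_empty] at this
    exact this
  -- choose k
  have hppos : 0 < p := lt_of_lt_of_le one_pos hp
  set ε' : ENNReal := ENNReal.ofReal ((δ / (2 * C')) ^ p) with hε'def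
  have hε'pos : 0 < ε' := by
    rw [hε'def]
    apply ENNReal.ofReal_pos.mpr
    exact Real.rpow_pos_of_pos (div_pos hδ (by linarith)) p
  have hsum_tend : Tendsto (fun k => ∑ j, volume (D j k)) atTop (𝓝 0) := by
    have := tendsto_finset_sum (Finset.univ : Finset (Fin N))
      (fun j _ => hDtend j)
    simpa using this
  obtain ⟨k, hk⟩ : ∃ k : ℕ, ∑ j, volume (D j k) < ε' := by
    have := (hsum_tend.eventually_lt_const hε'pos)
    exact this.exists
  -- the set where the approximation may fail
  set Z : Set (EuclideanSpace ℝ (Fin n)) :=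
    (⋃ i, frontier (τ i)) ∪ (⋃ j, D j k) with hZdef
  have hZmeas : MeasurableSet Z := by
    refine MeasurableSet.union ?_ ?_
    · exact MeasurableSet.iUnion fun i => isClosed_frontier.measurableSet
    · exact MeasurableSet.iUnion fun j => hDmeas j k
  have hZvol : volume Z < ε' := by
    have h1 : volume (⋃ i, frontier (τ i)) = 0 :=
      measure_iUnion_null fun i => Convex.addHaar_frontier volume (hτconv i)
    have h2 : volume (⋃ j, D j k) ≤ ∑ j, volume (D j k) := by
      refine le_trans (measure_iUnion_le _) ?_
      rw [tsum_fintype]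
    calc volume Z ≤ volume (⋃ i, frontier (τ i)) + volume (⋃ j, D j k) :=
          measure_union_le _ _
      _ = volume (⋃ j, D j k) := by rw [h1, zero_add]
      _ ≤ ∑ j, volume (D j k) := h2
      _ < ε' := hk
  -- pointwise facts
  have hgood : ∀ x ∈ Ω, x ∉ Z → (∑ i, F (k:ℝ) i x) - v x = 0 := by
    intro x hxΩ hxZ
    simp only [hZdef, Set.mem_union, Set.mem_iUnion, not_or, not_exists] at hxZ
    obtain ⟨hfr, hD⟩ := hxZ
    have hxcover : x ∈ ⋃ i, τ i := by rw [← hcover]; exact hxΩ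
    obtain ⟨i, hxi⟩ := Set.mem_iUnion.mp hxcover
    have hxint : x ∈ interior (τ i) := by
      by_contra hc
      exact hfr i ⟨subset_closure hxi, hc⟩
    have hv : v x = ⟪a i, x⟫ + c i := haff' i x hxint
    have hsum : ∑ i', F (k:ℝ) i' x = F (k:ℝ) i x := by
      refine Finset.sum_eq_single i ?_ (fun h => absurd (Finset.mem_univ i) h)
      intro j _ hji
      have hxτj : x ∉ τ j := by
        intro hxj
        have hxintj : x ∈ interior (τ j) := by
          by_contra hc
          exact hfr j ⟨subset_closure hxj, hc⟩
        have := hdisj j i hji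
        rw [Set.eq_empty_iff_forall_notMem] at this
        exact this x ⟨hxintj, hxint⟩
      have hfar : 2 * M ≤ (k:ℝ) * S j x := by
        by_contra hc
        push_neg at hc
        exact hD j ⟨hxΩ, hxτj, hc⟩
      exact hFfar (k:ℝ) j x hxΩ hfar
    rw [hsum, hFτ (k:ℝ) i x hxΩ hxi, hv, sub_self]
  have hbound : ∀ x ∈ Ω, |(∑ i, F (k:ℝ) i x) - v x| ≤ C' := by
    intro x hxΩ
    have h1 : |∑ i, F (k:ℝ) i x| ≤ ∑ i : Fin N, M :=
      le_trans (Finset.abs_sum_le_sum_abs _ _)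
        (Finset.sum_le_sum fun i _ => hFbd (k:ℝ) i x hxΩ)
    have h2 : |v x| ≤ |R| := le_trans (hR x hxΩ) (le_abs_self R)
    have h3 : ∑ i : Fin N, M = (N:ℝ) * M := by
      simp [Finset.sum_const, nsmul_eq_mul]
    calc |(∑ i, F (k:ℝ) i x) - v x| ≤ |∑ i, F (k:ℝ) i x| + |v x| := abs_sub _ _
      _ ≤ (N:ℝ) * M + |R| := by rw [← h3]; exact add_le_add h1 h2
      _ ≤ C' := by simp only [hC'def]; linarith
  -- network architecture
  set E₁ : (Fin N × Fin m') ⊕ Fin N ≃ Fin (N * m' + N) :=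
    ((finProdFinEquiv.sumCongr (Equiv.refl (Fin N))).trans finSumFinEquiv) with hE₁
  set E₂ : Fin N ⊕ Fin N ≃ Fin (N + N) := finSumFinEquiv with hE₂
  set W₁ : Fin (N * m' + N) → EuclideanSpace ℝ (Fin n) :=
    fun j => Sum.elim (fun pq : Fin N × Fin m' => -(Wp pq.1 pq.2)) (fun i => a i) (E₁.symm j)
    with hW₁
  set b₁ : Fin (N * m' + N) → ℝ :=
    fun j => Sum.elim (fun pq : Fin N × Fin m' => -(Bp pq.1 pq.2)) (fun i => c i + M) (E₁.symm j)
    with hb₁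
  set W₂ : Fin (N + N) → Fin (N * m' + N) → ℝ :=
    fun k' j => Sum.elim
      (fun i => Sum.elim (fun pq : Fin N × Fin m' => if pq.1 = i then -(k:ℝ) else 0)
        (fun i' => if i' = i then 1 else 0) (E₁.symm j))
      (fun i => Sum.elim (fun pq : Fin N × Fin m' => if pq.1 = i then -(k:ℝ) else 0)
        (fun _ => 0) (E₁.symm j))
      (E₂.symm k') with hW₂
  set b₂ : Fin (N + N) → ℝ := fun k' => Sum.elim (fun _ => 0) (fun _ => M) (E₂.symm k')
    with hb₂
  set w₃ : Fin (N + N) → ℝ := fun k' => Sum.elim (fun _ => 1) (fun _ => -1) (E₂.symm k')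
    with hw₃
  have hlayer1 : ∀ (x : EuclideanSpace ℝ (Fin n)) (s : (Fin N × Fin m') ⊕ Fin N),
      max (⟪W₁ (E₁ s), x⟫ + b₁ (E₁ s)) 0 =
      Sum.elim (fun pq : Fin N × Fin m' => max (-(⟪Wp pq.1 pq.2, x⟫ + Bp pq.1 pq.2)) 0)
        (fun i => max (⟪a i, x⟫ + c i + M) 0) s := by
    intro x s
    cases s with
    | inl pq =>
        simp only [hW₁, hb₁, Equiv.symm_apply_apply, Sum.elim_inl, inner_neg_left]
        congr 1
        ring
    | inr i =>
        simp only [hW₁, hb₁, Equiv.symm_apply_apply, Sum.elim_inr]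
        congr 1
        ring
  have inner_sum : ∀ (x : EuclideanSpace ℝ (Fin n)) (i : Fin N),
      ∑ pq : Fin N × Fin m', (if pq.1 = i then -(k:ℝ) else 0) *
        max (-(⟪Wp pq.1 pq.2, x⟫ + Bp pq.1 pq.2)) 0 = -(k:ℝ) * S i x := by
    intro x i
    rw [Fintype.sum_prod_type]
    rw [Finset.sum_eq_single i]
    · simp [hSdef, Finset.mul_sum]
    · intro i' _ hne
      simp [hne]
    · intro h
      exact absurd (Finset.mem_univ i) h
  have hsumA : ∀ (x : EuclideanSpace ℝ (Fin n)) (i : Fin N),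
      ∑ j, W₂ (E₂ (Sum.inl i)) j * max (⟪W₁ j, x⟫ + b₁ j) 0 + b₂ (E₂ (Sum.inl i))
        = max (⟪a i, x⟫ + c i + M) 0 - (k:ℝ) * S i x := by
    intro x i
    rw [← Equiv.sum_comp E₁ (fun j => W₂ (E₂ (Sum.inl i)) j * max (⟪W₁ j, x⟫ + b₁ j) 0)]
    have hterm : ∀ s, W₂ (E₂ (Sum.inl i)) (E₁ s) * max (⟪W₁ (E₁ s), x⟫ + b₁ (E₁ s)) 0 =
        Sum.elim (fun pq : Fin N × Fin m' => (if pq.1 = i then -(k:ℝ) else 0) *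
          max (-(⟪Wp pq.1 pq.2, x⟫ + Bp pq.1 pq.2)) 0)
          (fun i' => (if i' = i then (1:ℝ) else 0) * max (⟪a i', x⟫ + c i' + M) 0) s := by
      intro s
      rw [hlayer1 x s]
      cases s with
      | inl pq => simp [hW₂, Equiv.symm_apply_apply]
      | inr i' => simp [hW₂, Equiv.symm_apply_apply]
    simp only [hterm]
    rw [Fintype.sum_sum_type]
    simp only [Sum.elim_inl, Sum.elim_inr]
    rw [inner_sum x i]
    have h2 : ∑ i' : Fin N, (if i' = i then (1:ℝ) else 0) * max (⟪a i', x⟫ + c i' + M) 0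
        = max (⟪a i, x⟫ + c i + M) 0 := by
      simp only [ite_mul, one_mul, zero_mul]
      rw [Finset.sum_ite_eq' Finset.univ i]
      simp
    rw [h2]
    have hb2 : b₂ (E₂ (Sum.inl i)) = 0 := by simp [hb₂]
    rw [hb2]
    ring
  have hsumB : ∀ (x : EuclideanSpace ℝ (Fin n)) (i : Fin N),
      ∑ j, W₂ (E₂ (Sum.inr i)) j * max (⟪W₁ j, x⟫ + b₁ j) 0 + b₂ (E₂ (Sum.inr i))
        = M - (k:ℝ) * S i x := by
    intro x i
    rw [← Equiv.sum_comp E₁ (fun j => W₂ (E₂ (Sum.inr i)) j * max (⟪W₁ j, x⟫ + b₁ j) 0)]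
    have hterm : ∀ s, W₂ (E₂ (Sum.inr i)) (E₁ s) * max (⟪W₁ (E₁ s), x⟫ + b₁ (E₁ s)) 0 =
        Sum.elim (fun pq : Fin N × Fin m' => (if pq.1 = i then -(k:ℝ) else 0) *
          max (-(⟪Wp pq.1 pq.2, x⟫ + Bp pq.1 pq.2)) 0)
          (fun _ : Fin N => (0:ℝ)) s := by
      intro s
      rw [hlayer1 x s]
      cases s with
      | inl pq => simp [hW₂, Equiv.symm_apply_apply]
      | inr i' => simp [hW₂, Equiv.symm_apply_apply]
    simp only [hterm]
    rw [Fintype.sum_sum_type]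
    simp only [Sum.elim_inl, Sum.elim_inr]
    rw [inner_sum x i]
    have hb2 : b₂ (E₂ (Sum.inr i)) = M := by simp [hb₂]
    rw [hb2]
    simp
    ring
  have hnet : (fun x => ∑ i, F (k:ℝ) i x) =
      (fun x => ∑ k', w₃ k' *
        max (∑ j, W₂ k' j * max (⟪W₁ j, x⟫ + b₁ j) 0 + b₂ k') 0) := by
    funext x
    rw [← Equiv.sum_comp E₂ (fun k' => w₃ k' *
      max (∑ j, W₂ k' j * max (⟪W₁ j, x⟫ + b₁ j) 0 + b₂ k') 0)]
    rw [Fintype.sum_sum_type]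
    have hA : ∀ i : Fin N, w₃ (E₂ (Sum.inl i)) *
        max (∑ j, W₂ (E₂ (Sum.inl i)) j * max (⟪W₁ j, x⟫ + b₁ j) 0 + b₂ (E₂ (Sum.inl i))) 0
        = max (max (⟪a i, x⟫ + c i + M) 0 - (k:ℝ) * S i x) 0 := by
      intro i
      rw [hsumA x i]
      simp [hw₃]
    have hB : ∀ i : Fin N, w₃ (E₂ (Sum.inr i)) *
        max (∑ j, W₂ (E₂ (Sum.inr i)) j * max (⟪W₁ j, x⟫ + b₁ j) 0 + b₂ (E₂ (Sum.inr i))) 0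
        = -(max (M - (k:ℝ) * S i x) 0) := by
      intro i
      rw [hsumB x i]
      simp [hw₃]
    simp only [hA, hB]
    rw [hFdef]
    rw [Finset.sum_sub_distrib, Finset.sum_neg_distrib]
    ring
  -- the Lᵖ estimate
  set q : ENNReal := ENNReal.ofReal p with hqdef
  have hq0 : q ≠ 0 := by
    simp only [hqdef, ne_eq, ENNReal.ofReal_eq_zero, not_le]
    linarith
  have hqt : q ≠ ⊤ := ENNReal.ofReal_ne_top
  have key : eLpNorm (fun x => (∑ i, F (k:ℝ) i x) - v x) q (volume.restrict Ω)
      ≤ eLpNorm (Z.indicator fun _ => C') q (volume.restrict Ω) := by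
    apply eLpNorm_mono_ae
    rw [ae_restrict_iff' hΩm]
    filter_upwards with x hx
    by_cases hz : x ∈ Z
    · rw [Set.indicator_of_mem hz, Real.norm_eq_abs, Real.norm_eq_abs]
      exact le_trans (hbound x hx) (le_abs_self C')
    · rw [Set.indicator_of_notMem hz, hgood x hx hz]
  rw [eLpNorm_indicator_const hZmeas hq0 hqt] at key
  have hμZ : (volume.restrict Ω) Z ≤ volume Z := by
    rw [Measure.restrict_apply hZmeas]
    exact measure_mono Set.inter_subset_left
  have hqr : q.toReal = p := ENNReal.toReal_ofReal (le_of_lt hppos)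
  have hC'nn : (‖C'‖₊ : ENNReal) = ENNReal.ofReal C' := Real.enorm_eq_ofReal hC'pos.le
  have hεfinal : ENNReal.ofReal C' * ε' ^ (1 / p) ≤ ENNReal.ofReal δ := by
    have hbase : (0:ℝ) ≤ (δ / (2 * C')) ^ p :=
      Real.rpow_nonneg (le_of_lt (div_pos hδ (by linarith))) p
    have hεp : ε' ^ (1 / p) = ENNReal.ofReal (δ / (2 * C')) := by
      rw [hε'def, ENNReal.ofReal_rpow_of_nonneg hbase (by positivity)]
      congr 1
      have hb0 : (0:ℝ) ≤ δ / (2 * C') := le_of_lt (div_pos hδ (by linarith))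
      rw [← Real.rpow_mul hb0, mul_one_div_cancel (ne_of_gt hppos), Real.rpow_one]
    rw [hεp, ← ENNReal.ofReal_mul hC'pos.le]
    apply ENNReal.ofReal_le_ofReal
    have hcc : C' * (δ / (2 * C')) = δ / 2 := by
      field_simp
    rw [hcc]
    linarith
  have hstep : (‖C'‖₊ : ENNReal) * ((volume.restrict Ω) Z) ^ (1 / q.toReal)
      < ENNReal.ofReal δ := by
    rw [hqr, hC'nn]
    calc ENNReal.ofReal C' * ((volume.restrict Ω) Z) ^ (1 / p)
        < ENNReal.ofReal C' * ε' ^ (1 / p) := by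
          apply ENNReal.mul_lt_mul_right
          · exact (ENNReal.ofReal_pos.mpr hC'pos).ne'
          · exact ENNReal.ofReal_ne_top
          · exact ENNReal.rpow_lt_rpow (lt_of_le_of_lt hμZ hZvol) (by positivity)
      _ ≤ ENNReal.ofReal δ := hεfinal
  refine ⟨N * m' + N, N + N, W₁, b₁, W₂, b₂, w₃, (fun x => ∑ i, F (k:ℝ) i x), hnet, ?_⟩
  exact lt_of_le_of_lt key hstep
end
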